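/- arXiv:2004.07494 — 5 statements merged into one kernel-verified Lean document; each statement's English description precedes it below -/
import Mathlib

section
/- Let T1, T2, T3, T4 be bounded linear operators on H each admitting an A-adjoint (i.e. for each i there exists S_i with A∘S_i = T_i*∘A). Then w_B([[T1,0],[0,T4]]) ≤ w_B([[T1,T2],[T3,T4]]). -/
open scoped InnerProductSpace
open ContinuousLinearMap

variable {H : Type*} [NormedAddCommGroup H] [InnerProductSpace ℂ H] [CompleteSpace H]

/-- The `A`-seminorm `‖x‖_A = √⟨Ax,x⟩`. -/
noncomputable def aNorm (A : H →L[ℂ] H) (x : H) : ℝ :=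
  Real.sqrt (⟪A x, x⟫_ℂ).re

/-- The `A`-numerical radius `w_A(T) = sup {|⟨ATx,x⟩| : x ∈ H, ‖x‖_A = 1}`. -/
noncomputable def wA (A T : H →L[ℂ] H) : ℝ :=
  sSup {r : ℝ | ∃ x : H, aNorm A x = 1 ∧ r = ‖⟪A (T x), x⟫_ℂ‖}

/-- The `A`-operator seminorm `‖T‖_A = sup {‖Tx‖_A : x ∈ closure (range A), ‖x‖_A = 1}`. -/
noncomputable def aOpNorm (A T : H →L[ℂ] H) : ℝ :=
  sSup {r : ℝ | ∃ x : H, x ∈ closure (Set.range (⇑A)) ∧ aNorm A x = 1 ∧ r = aNorm A (T x)}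

/-- The `B`-numerical radius of the operator matrix `[[T1,T2],[T3,T4]]` acting on `H ⊕ H` by
`(x, y) ↦ (T1 x + T2 y, T3 x + T4 y)`, where `B = [[A,0],[0,A]]`:
`w_B(T) = sup {|⟨BTz,z⟩| : z ∈ H ⊕ H, ‖z‖_B = 1}`. -/
noncomputable def wB (A T1 T2 T3 T4 : H →L[ℂ] H) : ℝ :=
  sSup {r : ℝ | ∃ x y : H, Real.sqrt ((⟪A x, x⟫_ℂ).re + (⟪A y, y⟫_ℂ).re) = 1 ∧
    r = ‖⟪A (T1 x + T2 y), x⟫_ℂ + ⟪A (T3 x + T4 y), y⟫_ℂ‖}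

/-! ### Auxiliary lemmas -/

lemma innerA_eq (A R : H →L[ℂ] H) (hR : IsSelfAdjoint R) (hRR : R ∘L R = A) (x y : H) :
    ⟪A x, y⟫_ℂ = ⟪R x, R y⟫_ℂ := by
  have hsym := (ContinuousLinearMap.isSelfAdjoint_iff_isSymmetric.mp hR)
  have h1 : A x = R (R x) := by rw [← hRR]; rfl
  rw [h1]
  exact hsym (R x) y

lemma reA_eq (A R : H →L[ℂ] H) (hR : IsSelfAdjoint R) (hRR : R ∘L R = A) (x : H) :
    (⟪A x, x⟫_ℂ).re = ‖R x‖ ^ 2 := by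
  rw [innerA_eq A R hR hRR, inner_self_eq_norm_sq_to_K]
  norm_cast

lemma csA (A R : H →L[ℂ] H) (hR : IsSelfAdjoint R) (hRR : R ∘L R = A) (x y : H) :
    ‖⟪A x, y⟫_ℂ‖ ≤ ‖R x‖ * ‖R y‖ := by
  rw [innerA_eq A R hR hRR]
  exact norm_inner_le_norm (R x) (R y)

lemma pow_limit_le {a b D : ℝ} (hb : 0 ≤ b)
    (h : ∀ n : ℕ, a ^ (2 ^ n) ≤ D * b ^ (2 ^ n)) : a ≤ b := by
  by_contra hab
  push_neg at hab
  rcases eq_or_lt_of_le hb with hb0 | hb0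
  · have h0 := h 0
    simp [← hb0] at h0
    nlinarith
  · have hr : 1 < a / b := (one_lt_div hb0).mpr hab
    obtain ⟨n, hn⟩ := exists_nat_gt ((D - 1) / (a / b - 1))
    have hn2 : (n : ℝ) ≤ 2 ^ n := by
      exact_mod_cast (Nat.lt_two_pow_self (n := n)).le
    have hbern : 1 + (2 ^ n : ℝ) * (a / b - 1) ≤ (a / b) ^ (2 ^ n) := by
      have := one_add_mul_le_pow (a := a / b - 1) (by linarith) (2 ^ n)
      simpa using this
    have hd : (a / b) ^ (2 ^ n) ≤ D := by
      have hpow : a ^ (2 ^ n) ≤ D * b ^ (2 ^ n) := h n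
      have hbpos : (0:ℝ) < b ^ (2 ^ n) := pow_pos hb0 _
      rw [div_pow, div_le_iff₀ hbpos]
      linarith
    have h2 : (2 ^ n : ℝ) ≤ (D - 1) / (a / b - 1) := by
      rw [le_div_iff₀ (by linarith)]
      linarith
    linarith

lemma aSelfAdjoint_bound (A R N : H →L[ℂ] H) (hR : IsSelfAdjoint R) (hRR : R ∘L R = A)
    (hN : ∀ x y : H, ⟪A (N x), y⟫_ℂ = ⟪A x, N y⟫_ℂ) (x : H) :
    ‖R (N x)‖ ≤ ‖N‖ * ‖R x‖ := by
  have hNk : ∀ (k : ℕ) (u v : H), ⟪A ((N ^ k) u), v⟫_ℂ = ⟪A u, (N ^ k) v⟫_ℂ := by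
    intro k
    induction k with
    | zero => intro u v; simp
    | succ k ih =>
      intro u v
      have e1 : (N ^ (k + 1)) u = (N ^ k) (N u) := by
        rw [pow_succ]; rfl
      have e2 : (N ^ (k + 1)) v = N ((N ^ k) v) := by
        rw [pow_succ']; rfl
      rw [e1, e2, ih (N u) v, hN u ((N ^ k) v)]
  set p : ℕ → ℝ := fun n => ‖R ((N ^ (2 ^ n)) x)‖ with hp
  have hpnn : ∀ n, 0 ≤ p n := fun n => norm_nonneg _
  have hstep : ∀ n, p n ^ 2 ≤ ‖R x‖ * p (n + 1) := by
    intro n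
    have e1 : (⟪A ((N ^ (2 ^ n)) x), (N ^ (2 ^ n)) x⟫_ℂ).re = p n ^ 2 := by
      rw [reA_eq A R hR hRR]
    have e2 : ⟪A ((N ^ (2 ^ n)) x), (N ^ (2 ^ n)) x⟫_ℂ = ⟪A x, (N ^ (2 ^ (n + 1))) x⟫_ℂ := by
      rw [hNk (2 ^ n) x ((N ^ (2 ^ n)) x)]
      congr 1
      have : (N ^ (2 ^ n)) ((N ^ (2 ^ n)) x) = (N ^ (2 ^ n) * N ^ (2 ^ n)) x := rfl
      rw [this, ← pow_add]
      congr 2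
      omega
    calc p n ^ 2 = (⟪A x, (N ^ (2 ^ (n + 1))) x⟫_ℂ).re := by rw [← e1, e2]
      _ ≤ ‖⟪A x, (N ^ (2 ^ (n + 1))) x⟫_ℂ‖ := Complex.re_le_norm _
      _ ≤ ‖R x‖ * p (n + 1) := csA A R hR hRR _ _
  have hind : ∀ n, p 0 ^ (2 ^ n) ≤ ‖R x‖ ^ (2 ^ n - 1) * p n := by
    intro n
    induction n with
    | zero => simp
    | succ n ih =>
      have h1 : 1 ≤ 2 ^ n := Nat.one_le_two_pow
      have e : p 0 ^ (2 ^ (n + 1)) = (p 0 ^ (2 ^ n)) ^ 2 := by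
        rw [← pow_mul, pow_succ]
      rw [e]
      calc (p 0 ^ (2 ^ n)) ^ 2 ≤ (‖R x‖ ^ (2 ^ n - 1) * p n) ^ 2 := by
            apply pow_le_pow_left₀ (pow_nonneg (hpnn 0) _) ih
        _ = ‖R x‖ ^ (2 * (2 ^ n - 1)) * p n ^ 2 := by rw [mul_pow, ← pow_mul]; ring
        _ ≤ ‖R x‖ ^ (2 * (2 ^ n - 1)) * (‖R x‖ * p (n + 1)) := by
            apply mul_le_mul_of_nonneg_left (hstep n) (pow_nonneg (norm_nonneg _) _)
        _ = ‖R x‖ ^ (2 ^ (n + 1) - 1) * p (n + 1) := by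
            rw [← mul_assoc, ← pow_succ]
            congr 2
            omega
  have hpbound : ∀ n, p n ≤ ‖R‖ * (‖N‖ ^ (2 ^ n) * ‖x‖) := by
    intro n
    calc p n ≤ ‖R‖ * ‖(N ^ (2 ^ n)) x‖ := R.le_opNorm _
      _ ≤ ‖R‖ * (‖N ^ (2 ^ n)‖ * ‖x‖) := by
          apply mul_le_mul_of_nonneg_left ((N ^ (2 ^ n)).le_opNorm x) (norm_nonneg _)
      _ ≤ ‖R‖ * (‖N‖ ^ (2 ^ n) * ‖x‖) := by
          apply mul_le_mul_of_nonneg_left _ (norm_nonneg _)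
          apply mul_le_mul_of_nonneg_right
            (norm_pow_le' N (Nat.pos_of_ne_zero (by positivity))) (norm_nonneg _)
  have hgoal : p 0 = ‖R (N x)‖ := by simp [hp]
  rcases eq_or_lt_of_le (norm_nonneg (R x)) with h0 | h0
  · have : p 0 ^ 2 ≤ 0 := by
      have := hind 1
      rw [← h0] at this
      simpa using this
    have hp0 : p 0 = 0 := by nlinarith [hpnn 0]
    rw [← hgoal, hp0, ← h0]
    positivity
  · rw [← hgoal]
    apply pow_limit_le (b := ‖N‖ * ‖R x‖) (D := ‖R‖ * ‖x‖ / ‖R x‖)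
        (mul_nonneg (norm_nonneg _) (norm_nonneg _))
    intro n
    have h1 : 1 ≤ 2 ^ n := Nat.one_le_two_pow
    have hsplit : ‖R x‖ ^ (2 ^ n) = ‖R x‖ ^ (2 ^ n - 1) * ‖R x‖ := by
      rw [← pow_succ]; congr 1; omega
    calc p 0 ^ (2 ^ n) ≤ ‖R x‖ ^ (2 ^ n - 1) * p n := hind n
      _ ≤ ‖R x‖ ^ (2 ^ n - 1) * (‖R‖ * (‖N‖ ^ (2 ^ n) * ‖x‖)) := by
          apply mul_le_mul_of_nonneg_left (hpbound n) (pow_nonneg (norm_nonneg _) _)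
      _ = ‖R‖ * ‖x‖ / ‖R x‖ * (‖N‖ * ‖R x‖) ^ (2 ^ n) := by
          rw [mul_pow, hsplit]
          field_simp

lemma aAdjoint_relations (A S T : H →L[ℂ] H) (hA : A.IsPositive)
    (hS : A ∘L S = (ContinuousLinearMap.adjoint T) ∘L A) :
    ∀ u v : H, ⟪A (T u), v⟫_ℂ = ⟪A u, S v⟫_ℂ := by
  have hAsym : ∀ u v : H, ⟪A u, v⟫_ℂ = ⟪u, A v⟫_ℂ := fun u v =>
    (ContinuousLinearMap.isSelfAdjoint_iff_isSymmetric.mp hA.isSelfAdjoint) u v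
  intro u v
  have h1 : A (S v) = (ContinuousLinearMap.adjoint T) (A v) := by
    have := congrArg (fun f : H →L[ℂ] H => f v) hS
    simpa using this
  calc ⟪A (T u), v⟫_ℂ = ⟪T u, A v⟫_ℂ := hAsym _ _
    _ = ⟪u, (ContinuousLinearMap.adjoint T) (A v)⟫_ℂ :=
        (ContinuousLinearMap.adjoint_inner_right T u (A v)).symm
    _ = ⟪u, A (S v)⟫_ℂ := by rw [h1]
    _ = ⟪A u, S v⟫_ℂ := (hAsym _ _).symm

lemma aAdjoint_bound (A R S T : H →L[ℂ] H) (hA : A.IsPositive)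
    (hR : IsSelfAdjoint R) (hRR : R ∘L R = A)
    (hS : A ∘L S = (ContinuousLinearMap.adjoint T) ∘L A) (x : H) :
    ‖R (T x)‖ ≤ Real.sqrt ‖S ∘L T‖ * ‖R x‖ := by
  have hTA := aAdjoint_relations A S T hA hS
  have hN : ∀ u v : H, ⟪A ((S ∘L T) u), v⟫_ℂ = ⟪A u, (S ∘L T) v⟫_ℂ := by
    intro u v
    have hAS : ∀ u v : H, ⟪A (S u), v⟫_ℂ = ⟪A u, T v⟫_ℂ := by
      intro u v
      have h1 : A (S u) = (ContinuousLinearMap.adjoint T) (A u) := by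
        have := congrArg (fun f : H →L[ℂ] H => f u) hS
        simpa using this
      rw [h1]
      exact ContinuousLinearMap.adjoint_inner_left T v (A u)
    calc ⟪A ((S ∘L T) u), v⟫_ℂ = ⟪A (S (T u)), v⟫_ℂ := rfl
      _ = ⟪A (T u), T v⟫_ℂ := hAS (T u) v
      _ = ⟪A u, S (T v)⟫_ℂ := hTA u (T v)
      _ = ⟪A u, (S ∘L T) v⟫_ℂ := rfl
  have key := aSelfAdjoint_bound A R (S ∘L T) hR hRR hN x
  have hsq : ‖R (T x)‖ ^ 2 ≤ ‖S ∘L T‖ * ‖R x‖ ^ 2 := by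
    have e1 : ‖R (T x)‖ ^ 2 = (⟪A (T x), T x⟫_ℂ).re := (reA_eq A R hR hRR (T x)).symm
    have e2 : ⟪A (T x), T x⟫_ℂ = ⟪A x, (S ∘L T) x⟫_ℂ := hTA x (T x)
    calc ‖R (T x)‖ ^ 2 = (⟪A x, (S ∘L T) x⟫_ℂ).re := by rw [e1, e2]
      _ ≤ ‖⟪A x, (S ∘L T) x⟫_ℂ‖ := Complex.re_le_norm _
      _ ≤ ‖R x‖ * ‖R ((S ∘L T) x)‖ := csA A R hR hRR _ _
      _ ≤ ‖R x‖ * (‖S ∘L T‖ * ‖R x‖) :=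
          mul_le_mul_of_nonneg_left key (norm_nonneg _)
      _ = ‖S ∘L T‖ * ‖R x‖ ^ 2 := by ring
  calc ‖R (T x)‖ = Real.sqrt (‖R (T x)‖ ^ 2) := (Real.sqrt_sq (norm_nonneg _)).symm
    _ ≤ Real.sqrt (‖S ∘L T‖ * ‖R x‖ ^ 2) := Real.sqrt_le_sqrt hsq
    _ = Real.sqrt ‖S ∘L T‖ * ‖R x‖ := by
        rw [Real.sqrt_mul (norm_nonneg _), Real.sqrt_sq (norm_nonneg _)]

theorem stmt0 (A T1 T2 T3 T4 : H →L[ℂ] H) (hA : A.IsPositive)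
    (h1 : ∃ S : H →L[ℂ] H, A ∘L S = (ContinuousLinearMap.adjoint T1) ∘L A)
    (h2 : ∃ S : H →L[ℂ] H, A ∘L S = (ContinuousLinearMap.adjoint T2) ∘L A)
    (h3 : ∃ S : H →L[ℂ] H, A ∘L S = (ContinuousLinearMap.adjoint T3) ∘L A)
    (h4 : ∃ S : H →L[ℂ] H, A ∘L S = (ContinuousLinearMap.adjoint T4) ∘L A) :
    wB A T1 0 0 T4 ≤ wB A T1 T2 T3 T4 := by
  obtain ⟨S1, hS1⟩ := h1
  obtain ⟨S2, hS2⟩ := h2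
  obtain ⟨S3, hS3⟩ := h3
  obtain ⟨S4, hS4⟩ := h4
  set R : H →L[ℂ] H := CFC.sqrt A with hRdef
  have hR : IsSelfAdjoint R := IsSelfAdjoint.of_nonneg (CFC.sqrt_nonneg A)
  have hRR : R ∘L R = A :=
    CFC.sqrt_mul_sqrt_self A ((ContinuousLinearMap.nonneg_iff_isPositive A).2 hA)
  -- the constraint as a statement about R
  have hcon : ∀ x y : H,
      Real.sqrt ((⟪A x, x⟫_ℂ).re + (⟪A y, y⟫_ℂ).re) = 1 ↔ ‖R x‖ ^ 2 + ‖R y‖ ^ 2 = 1 := by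
    intro x y
    rw [reA_eq A R hR hRR, reA_eq A R hR hRR, Real.sqrt_eq_one]
  set c : ℝ := Real.sqrt ‖S1 ∘L T1‖ + Real.sqrt ‖S2 ∘L T2‖ +
      Real.sqrt ‖S3 ∘L T3‖ + Real.sqrt ‖S4 ∘L T4‖ with hc
  have hterm : ∀ (S T : H →L[ℂ] H), A ∘L S = (ContinuousLinearMap.adjoint T) ∘L A →
      ∀ u v : H, ‖R u‖ ≤ 1 → ‖R v‖ ≤ 1 → ‖⟪A (T u), v⟫_ℂ‖ ≤ Real.sqrt ‖S ∘L T‖ := by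
    intro S T hS u v hu hv
    have h1 : ‖⟪A (T u), v⟫_ℂ‖ ≤ ‖R (T u)‖ * ‖R v‖ := csA A R hR hRR _ _
    have h2 : ‖R (T u)‖ ≤ Real.sqrt ‖S ∘L T‖ * ‖R u‖ := aAdjoint_bound A R S T hA hR hRR hS u
    have h3 : (0:ℝ) ≤ Real.sqrt ‖S ∘L T‖ := Real.sqrt_nonneg _
    nlinarith [norm_nonneg (R (T u)), norm_nonneg (R v), norm_nonneg (R u)]
  -- the two sets
  have hbddF : ∀ r ∈ {r : ℝ | ∃ x y : H,
      Real.sqrt ((⟪A x, x⟫_ℂ).re + (⟪A y, y⟫_ℂ).re) = 1 ∧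
      r = ‖⟪A (T1 x + T2 y), x⟫_ℂ + ⟪A (T3 x + T4 y), y⟫_ℂ‖}, r ≤ c := by
    rintro r ⟨x, y, hxy, rfl⟩
    rw [hcon] at hxy
    have hx1 : ‖R x‖ ≤ 1 := by nlinarith [norm_nonneg (R x), norm_nonneg (R y)]
    have hy1 : ‖R y‖ ≤ 1 := by nlinarith [norm_nonneg (R x), norm_nonneg (R y)]
    have hexp : ⟪A (T1 x + T2 y), x⟫_ℂ + ⟪A (T3 x + T4 y), y⟫_ℂ =
        ⟪A (T1 x), x⟫_ℂ + ⟪A (T2 y), x⟫_ℂ + (⟪A (T3 x), y⟫_ℂ + ⟪A (T4 y), y⟫_ℂ) := by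
      simp [map_add, inner_add_left]
    rw [hexp]
    calc ‖⟪A (T1 x), x⟫_ℂ + ⟪A (T2 y), x⟫_ℂ + (⟪A (T3 x), y⟫_ℂ + ⟪A (T4 y), y⟫_ℂ)‖
        ≤ ‖⟪A (T1 x), x⟫_ℂ‖ + ‖⟪A (T2 y), x⟫_ℂ‖ + ‖⟪A (T3 x), y⟫_ℂ‖ + ‖⟪A (T4 y), y⟫_ℂ‖ := by
          calc _ ≤ ‖⟪A (T1 x), x⟫_ℂ + ⟪A (T2 y), x⟫_ℂ‖ + ‖⟪A (T3 x), y⟫_ℂ + ⟪A (T4 y), y⟫_ℂ‖ :=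
                norm_add_le _ _
            _ ≤ _ := by
                have := norm_add_le (⟪A (T1 x), x⟫_ℂ) (⟪A (T2 y), x⟫_ℂ)
                have := norm_add_le (⟪A (T3 x), y⟫_ℂ) (⟪A (T4 y), y⟫_ℂ)
                linarith
      _ ≤ c := by
          have b1 := hterm S1 T1 hS1 x x hx1 hx1
          have b2 := hterm S2 T2 hS2 y x hy1 hx1
          have b3 := hterm S3 T3 hS3 x y hx1 hy1
          have b4 := hterm S4 T4 hS4 y y hy1 hy1
          rw [hc]; linarith
  unfold wB
  rcases Set.eq_empty_or_nonempty {r : ℝ | ∃ x y : H,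
      Real.sqrt ((⟪A x, x⟫_ℂ).re + (⟪A y, y⟫_ℂ).re) = 1 ∧
      r = ‖⟪A (T1 x + (0 : H →L[ℂ] H) y), x⟫_ℂ + ⟪A ((0 : H →L[ℂ] H) x + T4 y), y⟫_ℂ‖}
    with hD | hD
  · rw [hD, Real.sSup_empty]
    have hF : {r : ℝ | ∃ x y : H,
        Real.sqrt ((⟪A x, x⟫_ℂ).re + (⟪A y, y⟫_ℂ).re) = 1 ∧
        r = ‖⟪A (T1 x + T2 y), x⟫_ℂ + ⟪A (T3 x + T4 y), y⟫_ℂ‖} = ∅ := by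
      rw [Set.eq_empty_iff_forall_notMem]
      rintro r ⟨x, y, hxy, -⟩
      have : (‖⟪A (T1 x + (0 : H →L[ℂ] H) y), x⟫_ℂ + ⟪A ((0 : H →L[ℂ] H) x + T4 y), y⟫_ℂ‖ : ℝ)
          ∈ (∅ : Set ℝ) := by
        rw [← hD]
        exact ⟨x, y, hxy, rfl⟩
      exact this.elim
    rw [hF, Real.sSup_empty]
  · have hbddAboveF : BddAbove {r : ℝ | ∃ x y : H,
        Real.sqrt ((⟪A x, x⟫_ℂ).re + (⟪A y, y⟫_ℂ).re) = 1 ∧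
        r = ‖⟪A (T1 x + T2 y), x⟫_ℂ + ⟪A (T3 x + T4 y), y⟫_ℂ‖} := ⟨c, hbddF⟩
    apply csSup_le hD
    rintro r ⟨x, y, hxy, rfl⟩
    -- abbreviations
    set a := ⟪A (T1 x), x⟫_ℂ
    set b := ⟪A (T2 y), x⟫_ℂ
    set c' := ⟪A (T3 x), y⟫_ℂ
    set d := ⟪A (T4 y), y⟫_ℂ
    have hu : (‖a + b + (c' + d)‖ : ℝ) ∈ {r : ℝ | ∃ x y : H,
        Real.sqrt ((⟪A x, x⟫_ℂ).re + (⟪A y, y⟫_ℂ).re) = 1 ∧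
        r = ‖⟪A (T1 x + T2 y), x⟫_ℂ + ⟪A (T3 x + T4 y), y⟫_ℂ‖} := by
      refine ⟨x, y, hxy, ?_⟩
      simp [a, b, c', d, map_add, inner_add_left]
    have hxy' : Real.sqrt ((⟪A x, x⟫_ℂ).re + (⟪A (-y), -y⟫_ℂ).re) = 1 := by
      simpa using hxy
    have hv : (‖a - b - c' + d‖ : ℝ) ∈ {r : ℝ | ∃ x y : H,
        Real.sqrt ((⟪A x, x⟫_ℂ).re + (⟪A y, y⟫_ℂ).re) = 1 ∧
        r = ‖⟪A (T1 x + T2 y), x⟫_ℂ + ⟪A (T3 x + T4 y), y⟫_ℂ‖} := by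
      refine ⟨x, -y, hxy', ?_⟩
      have : ⟪A (T1 x + T2 (-y)), x⟫_ℂ + ⟪A (T3 x + T4 (-y)), -y⟫_ℂ
          = a - b - c' + d := by
        simp only [map_neg, map_add, inner_add_left, inner_neg_left, inner_neg_right, a, b, c', d]
        ring
      rw [this]
    have hru : ‖a + b + (c' + d)‖ ≤ sSup _ := le_csSup hbddAboveF hu
    have hrv : ‖a - b - c' + d‖ ≤ sSup _ := le_csSup hbddAboveF hv
    have hval : ⟪A (T1 x + (0 : H →L[ℂ] H) y), x⟫_ℂ + ⟪A ((0 : H →L[ℂ] H) x + T4 y), y⟫_ℂ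
        = a + d := by
      simp [a, d]
    rw [hval]
    have hsplit : a + d = ((a + b + (c' + d)) + (a - b - c' + d)) / 2 := by ring
    calc ‖a + d‖ = ‖((a + b + (c' + d)) + (a - b - c' + d)) / 2‖ := by rw [← hsplit]
      _ ≤ (‖a + b + (c' + d)‖ + ‖a - b - c' + d‖) / 2 := by
          rw [norm_div]
          simp only [Complex.norm_ofNat]
          apply div_le_div_of_nonneg_right (norm_add_le _ _) (by norm_num)
      _ ≤ _ := by
          have h2 := hru
          have h3 := hrv
          linarith
end

section
/- Let T1, T2, T3, T4 be bounded linear operators on H each admitting an A-adjoint (i.e. for each i there exists S_i with A∘S_i = T_i*∘A). Then w_B([[0,T2],[T3,0]]) ≤ w_B([[T1,T2],[T3,T4]]). -/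
open scoped InnerProductSpace
open ContinuousLinearMap

variable {H : Type*} [NormedAddCommGroup H] [InnerProductSpace ℂ H] [CompleteSpace H]

private lemma inner_QQ {Q : H →L[ℂ] H} (hQ : ContinuousLinearMap.adjoint Q = Q)
    (u v : H) : ⟪(Q ∘L Q) u, v⟫_ℂ = ⟪Q u, Q v⟫_ℂ := by
  have h : ⟪(ContinuousLinearMap.adjoint Q) (Q u), v⟫_ℂ = ⟪Q u, Q v⟫_ℂ :=
    ContinuousLinearMap.adjoint_inner_left Q v (Q u)
  rw [hQ] at h
  simpa using h

private lemma normQ_sq {Q : H →L[ℂ] H} (hQ : ContinuousLinearMap.adjoint Q = Q)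
    (w : H) : ‖Q w‖ ^ 2 = (⟪(Q ∘L Q) w, w⟫_ℂ).re := by
  rw [inner_QQ hQ]
  simpa using (inner_self_eq_norm_sq (𝕜 := ℂ) (Q w)).symm

private lemma claim1 {Q R : H →L[ℂ] H} (hQ : ContinuousLinearMap.adjoint Q = Q)
    (hR : star R * (Q ∘L Q) = (Q ∘L Q) * R) (k : ℕ) (u : H) :
    ‖Q ((R ^ k) u)‖ ^ 2 ≤ ‖Q u‖ * ‖Q ((R ^ (2 * k)) u)‖ := by
  have hRk : star (R ^ k) * (Q ∘L Q) = (Q ∘L Q) * R ^ k := by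
    induction k with
    | zero => simp
    | succ n ih =>
      rw [pow_succ' R n, star_mul, mul_assoc, hR, ← mul_assoc, ih, mul_assoc, ← pow_succ, pow_succ']
  have e : ⟪(Q ∘L Q) ((R ^ k) u), (R ^ k) u⟫_ℂ = ⟪Q u, Q ((R ^ (2 * k)) u)⟫_ℂ := by
    have h1 : (Q ∘L Q) ((R ^ k) u) = (star (R ^ k)) ((Q ∘L Q) u) := by
      have := congrArg (fun (W : H →L[ℂ] H) => W u) hRk
      simpa [ContinuousLinearMap.mul_apply] using this.symm
    rw [h1, ContinuousLinearMap.star_eq_adjoint, ContinuousLinearMap.adjoint_inner_left,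
      ← inner_QQ hQ]
    congr 1
    have h2 : (R ^ k) ((R ^ k) u) = (R ^ (2 * k)) u := by
      rw [two_mul, pow_add, ContinuousLinearMap.mul_apply]
    rw [h2]
  calc ‖Q ((R ^ k) u)‖ ^ 2 = (⟪(Q ∘L Q) ((R ^ k) u), (R ^ k) u⟫_ℂ).re := normQ_sq hQ _
    _ = (⟪Q u, Q ((R ^ (2 * k)) u)⟫_ℂ).re := by rw [e]
    _ ≤ ‖⟪Q u, Q ((R ^ (2 * k)) u)⟫_ℂ‖ := Complex.re_le_norm _
    _ ≤ ‖Q u‖ * ‖Q ((R ^ (2 * k)) u)‖ := norm_inner_le_norm _ _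

private lemma claim2 {Q R : H →L[ℂ] H} (hQ : ContinuousLinearMap.adjoint Q = Q)
    (hR : star R * (Q ∘L Q) = (Q ∘L Q) * R) (n : ℕ) (u : H) :
    ‖Q (R u)‖ ^ (2 ^ n) ≤ ‖Q u‖ ^ (2 ^ n - 1) * ‖Q ((R ^ (2 ^ n)) u)‖ := by
  induction n with
  | zero => simpa using le_of_eq (by rw [pow_one])
  | succ n ih =>
    have h1 : ‖Q (R u)‖ ^ (2 ^ (n + 1)) = (‖Q (R u)‖ ^ (2 ^ n)) ^ 2 := by
      rw [← pow_mul, pow_succ]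
    have h2 : (‖Q (R u)‖ ^ (2 ^ n)) ^ 2 ≤ (‖Q u‖ ^ (2 ^ n - 1) * ‖Q ((R ^ (2 ^ n)) u)‖) ^ 2 :=
      pow_le_pow_left₀ (pow_nonneg (norm_nonneg _) _) ih 2
    have h3 := claim1 hQ hR (2 ^ n) u
    have h4 : (2 : ℕ) * 2 ^ n = 2 ^ (n + 1) := by rw [pow_succ]; ring
    rw [h4] at h3
    have h5 : (‖Q u‖ ^ (2 ^ n - 1) * ‖Q ((R ^ (2 ^ n)) u)‖) ^ 2
        ≤ ‖Q u‖ ^ (2 ^ (n + 1) - 1) * ‖Q ((R ^ (2 ^ (n + 1))) u)‖ := by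
      rw [mul_pow, ← pow_mul]
      calc ‖Q u‖ ^ ((2 ^ n - 1) * 2) * ‖Q ((R ^ 2 ^ n) u)‖ ^ 2
          ≤ ‖Q u‖ ^ ((2 ^ n - 1) * 2) * (‖Q u‖ * ‖Q ((R ^ (2 ^ (n + 1))) u)‖) :=
            mul_le_mul_of_nonneg_left h3 (pow_nonneg (norm_nonneg _) _)
        _ = ‖Q u‖ ^ (2 ^ (n + 1) - 1) * ‖Q ((R ^ (2 ^ (n + 1))) u)‖ := by
            rw [← mul_assoc, ← pow_succ]
            congr 2
            have hm : 1 ≤ 2 ^ n := Nat.one_le_two_pow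
            have h6 : 2 ^ (n + 1) = 2 * 2 ^ n := by rw [pow_succ]; ring
            omega
    exact h1 ▸ (h2.trans h5)

private lemma qbound {Q R : H →L[ℂ] H} (hQ : ContinuousLinearMap.adjoint Q = Q)
    (hR : star R * (Q ∘L Q) = (Q ∘L Q) * R) (u : H) :
    ‖Q (R u)‖ ≤ ‖R‖ * ‖Q u‖ := by
  rcases eq_or_lt_of_le (norm_nonneg (Q u)) with h0 | h0
  · have h := claim1 hQ hR 1 u
    rw [pow_one] at h
    rw [← h0] at h ⊢
    nlinarith [norm_nonneg (Q (R u)), norm_nonneg (Q ((R ^ (2 * 1)) u))]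
  · by_contra hc
    push_neg at hc
    have hR0 : 0 < ‖R‖ := by
      rcases eq_or_lt_of_le (norm_nonneg R) with h | h
      · exfalso
        have hRz : R = 0 := by rw [← norm_eq_zero]; exact h.symm
        rw [hRz] at hc
        simp at hc
      · exact h
    set t := ‖Q (R u)‖ / (‖R‖ * ‖Q u‖) with hts
    have ht : 1 < t := (one_lt_div (by positivity)).2 hc
    have hKn : ∀ n : ℕ, t ^ (2 ^ n) ≤ ‖Q‖ * ‖u‖ / ‖Q u‖ := by
      intro n
      have h2 := claim2 hQ hR n u
      have h3 : ‖Q ((R ^ (2 ^ n)) u)‖ ≤ ‖Q‖ * (‖R‖ ^ (2 ^ n) * ‖u‖) := by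
        calc ‖Q ((R ^ 2 ^ n) u)‖ ≤ ‖Q‖ * ‖(R ^ 2 ^ n) u‖ := Q.le_opNorm _
          _ ≤ ‖Q‖ * (‖R ^ 2 ^ n‖ * ‖u‖) :=
              mul_le_mul_of_nonneg_left ((R ^ 2 ^ n).le_opNorm u) (norm_nonneg Q)
          _ ≤ ‖Q‖ * (‖R‖ ^ 2 ^ n * ‖u‖) := by
              have hp := norm_pow_le' R (pow_pos two_pos n)
              gcongr
      have key : ‖Q (R u)‖ ^ (2 ^ n) ≤ (‖Q‖ * ‖u‖ / ‖Q u‖) * (‖R‖ * ‖Q u‖) ^ (2 ^ n) := by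
        have step : ‖Q (R u)‖ ^ (2 ^ n) ≤ ‖Q u‖ ^ (2 ^ n - 1) * (‖Q‖ * (‖R‖ ^ (2 ^ n) * ‖u‖)) :=
          h2.trans (mul_le_mul_of_nonneg_left h3 (pow_nonneg (norm_nonneg _) _))
        have heq : (‖Q‖ * ‖u‖ / ‖Q u‖) * (‖R‖ * ‖Q u‖) ^ (2 ^ n)
            = ‖Q u‖ ^ (2 ^ n - 1) * (‖Q‖ * (‖R‖ ^ (2 ^ n) * ‖u‖)) := by
          have hm : (2 : ℕ) ^ n = (2 ^ n - 1) + 1 := by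
            have : 1 ≤ 2 ^ n := Nat.one_le_two_pow
            omega
          rw [mul_pow, hm, pow_succ]
          field_simp
          ring_nf
          simp only [Nat.add_sub_cancel_left]
        rw [heq]
        exact step
      rw [hts, div_pow, div_le_iff₀ (by positivity)]
      exact key
    obtain ⟨n, hn⟩ := pow_unbounded_of_one_lt (‖Q‖ * ‖u‖ / ‖Q u‖) ht
    have hmono : t ^ n ≤ t ^ (2 ^ n) := pow_le_pow_right₀ ht.le (Nat.le_of_lt (Nat.lt_two_pow_self (n := n)))
    linarith [hKn n]

private lemma abound {Q T S : H →L[ℂ] H} (hQ : ContinuousLinearMap.adjoint Q = Q)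
    (hS : (Q ∘L Q) ∘L S = ContinuousLinearMap.adjoint T ∘L (Q ∘L Q)) :
    ∃ c : ℝ, 0 ≤ c ∧ ∀ u v : H, ‖⟪(Q ∘L Q) (T u), v⟫_ℂ‖ ≤ c * (‖Q u‖ * ‖Q v‖) := by
  set A := Q ∘L Q with hAdef
  have hAsa : star A = A := by
    rw [hAdef, ← ContinuousLinearMap.mul_def, star_mul, ContinuousLinearMap.star_eq_adjoint,
      hQ]
  have hSm : A * S = star T * A := by
    rw [ContinuousLinearMap.mul_def, ContinuousLinearMap.mul_def,
      ContinuousLinearMap.star_eq_adjoint]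
    exact hS
  have hS' : star S * A = A * T := by
    have := congrArg star hSm
    rw [star_mul, star_mul, hAsa, star_star] at this
    exact this
  set R := S * T with hRdef
  have hR : star R * A = A * R := by
    rw [hRdef, star_mul, mul_assoc, hS', ← mul_assoc, ← hSm, mul_assoc]
  have hqb := qbound hQ hR
  have hTb : ∀ u : H, ‖Q (T u)‖ ≤ Real.sqrt ‖R‖ * ‖Q u‖ := by
    intro u
    have e1 : ⟪A (T u), T u⟫_ℂ = ⟪Q u, Q (R u)⟫_ℂ := by
      have h1 : A (T u) = (star S) (A u) := by
        have := congrArg (fun (W : H →L[ℂ] H) => W u) hS'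
        simpa [ContinuousLinearMap.mul_apply] using this.symm
      rw [h1, ContinuousLinearMap.star_eq_adjoint]
      rw [ContinuousLinearMap.adjoint_inner_left S (T u) (A u)]
      rw [← inner_QQ hQ]
      congr 1
    have e2 : ‖Q (T u)‖ ^ 2 ≤ ‖R‖ * ‖Q u‖ ^ 2 := by
      calc ‖Q (T u)‖ ^ 2 = (⟪A (T u), T u⟫_ℂ).re := normQ_sq hQ _
        _ = (⟪Q u, Q (R u)⟫_ℂ).re := by rw [e1]
        _ ≤ ‖⟪Q u, Q (R u)⟫_ℂ‖ := Complex.re_le_norm _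
        _ ≤ ‖Q u‖ * ‖Q (R u)‖ := norm_inner_le_norm _ _
        _ ≤ ‖Q u‖ * (‖R‖ * ‖Q u‖) := mul_le_mul_of_nonneg_left (hqb u) (norm_nonneg _)
        _ = ‖R‖ * ‖Q u‖ ^ 2 := by ring
    have e3 : ‖Q (T u)‖ ^ 2 ≤ (Real.sqrt ‖R‖ * ‖Q u‖) ^ 2 := by
      rw [mul_pow, Real.sq_sqrt (norm_nonneg R)]
      exact e2
    exact (pow_le_pow_iff_left₀ (norm_nonneg _) (by positivity) (by norm_num)).1 e3
  refine ⟨Real.sqrt ‖R‖, Real.sqrt_nonneg _, fun u v => ?_⟩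
  rw [inner_QQ hQ]
  calc ‖⟪Q (T u), Q v⟫_ℂ‖ ≤ ‖Q (T u)‖ * ‖Q v‖ := norm_inner_le_norm _ _
    _ ≤ (Real.sqrt ‖R‖ * ‖Q u‖) * ‖Q v‖ :=
        mul_le_mul_of_nonneg_right (hTb u) (norm_nonneg _)
    _ = Real.sqrt ‖R‖ * (‖Q u‖ * ‖Q v‖) := by ring

set_option maxHeartbeats 1000000 in
theorem stmt1 (A T1 T2 T3 T4 : H →L[ℂ] H) (hA : A.IsPositive)
    (h1 : ∃ S : H →L[ℂ] H, A ∘L S = (ContinuousLinearMap.adjoint T1) ∘L A)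
    (h2 : ∃ S : H →L[ℂ] H, A ∘L S = (ContinuousLinearMap.adjoint T2) ∘L A)
    (h3 : ∃ S : H →L[ℂ] H, A ∘L S = (ContinuousLinearMap.adjoint T3) ∘L A)
    (h4 : ∃ S : H →L[ℂ] H, A ∘L S = (ContinuousLinearMap.adjoint T4) ∘L A) :
    wB A 0 T2 T3 0 ≤ wB A T1 T2 T3 T4 := by
  obtain ⟨Q, hQ, hQA⟩ : ∃ Q : H →L[ℂ] H, ContinuousLinearMap.adjoint Q = Q ∧ Q ∘L Q = A := by
    have h0 : (0 : H →L[ℂ] H) ≤ A := (A.nonneg_iff_isPositive).2 hA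
    exact ⟨CFC.sqrt A, IsSelfAdjoint.of_nonneg (CFC.sqrt_nonneg (a := A)),
      CFC.sqrt_mul_sqrt_self A h0⟩
  subst hQA
  by_cases hex : ∃ x y : H,
      Real.sqrt ((⟪(Q ∘L Q) x, x⟫_ℂ).re + (⟪(Q ∘L Q) y, y⟫_ℂ).re) = 1
  · obtain ⟨S1, hS1⟩ := h1
    obtain ⟨S2, hS2⟩ := h2
    obtain ⟨S3, hS3⟩ := h3
    obtain ⟨S4, hS4⟩ := h4
    obtain ⟨c1, hc1, hb1⟩ := abound hQ hS1
    obtain ⟨c2, hc2, hb2⟩ := abound hQ hS2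
    obtain ⟨c3, hc3, hb3⟩ := abound hQ hS3
    obtain ⟨c4, hc4, hb4⟩ := abound hQ hS4
    have ncond : ∀ x y : H,
        Real.sqrt ((⟪(Q ∘L Q) x, x⟫_ℂ).re + (⟪(Q ∘L Q) y, y⟫_ℂ).re) = 1 →
        ‖Q x‖ ≤ 1 ∧ ‖Q y‖ ≤ 1 := by
      intro x y hxy
      rw [← normQ_sq hQ x, ← normQ_sq hQ y, Real.sqrt_eq_one] at hxy
      constructor <;> nlinarith [norm_nonneg (Q x), norm_nonneg (Q y)]
    have bdd : BddAbove {r : ℝ | ∃ x y : H,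
        Real.sqrt ((⟪(Q ∘L Q) x, x⟫_ℂ).re + (⟪(Q ∘L Q) y, y⟫_ℂ).re) = 1 ∧
        r = ‖⟪(Q ∘L Q) (T1 x + T2 y), x⟫_ℂ + ⟪(Q ∘L Q) (T3 x + T4 y), y⟫_ℂ‖} := by
      refine ⟨c1 + c2 + c3 + c4, ?_⟩
      rintro r ⟨x, y, hxy, rfl⟩
      obtain ⟨hx1, hy1⟩ := ncond x y hxy
      have e : ⟪(Q ∘L Q) (T1 x + T2 y), x⟫_ℂ + ⟪(Q ∘L Q) (T3 x + T4 y), y⟫_ℂ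
          = (⟪(Q ∘L Q) (T1 x), x⟫_ℂ + ⟪(Q ∘L Q) (T2 y), x⟫_ℂ)
            + (⟪(Q ∘L Q) (T3 x), y⟫_ℂ + ⟪(Q ∘L Q) (T4 y), y⟫_ℂ) := by
        simp [map_add, inner_add_left]
      rw [e]
      have b1 := hb1 x x; have b2 := hb2 y x; have b3 := hb3 x y; have b4 := hb4 y y
      have mxx : ‖Q x‖ * ‖Q x‖ ≤ 1 := mul_le_one₀ hx1 (norm_nonneg _) hx1
      have mxy : ‖Q x‖ * ‖Q y‖ ≤ 1 := mul_le_one₀ hx1 (norm_nonneg _) hy1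
      have myx : ‖Q y‖ * ‖Q x‖ ≤ 1 := mul_le_one₀ hy1 (norm_nonneg _) hx1
      have myy : ‖Q y‖ * ‖Q y‖ ≤ 1 := mul_le_one₀ hy1 (norm_nonneg _) hy1
      have hn : ‖(⟪(Q ∘L Q) (T1 x), x⟫_ℂ + ⟪(Q ∘L Q) (T2 y), x⟫_ℂ)
            + (⟪(Q ∘L Q) (T3 x), y⟫_ℂ + ⟪(Q ∘L Q) (T4 y), y⟫_ℂ)‖
          ≤ ‖⟪(Q ∘L Q) (T1 x), x⟫_ℂ‖ + ‖⟪(Q ∘L Q) (T2 y), x⟫_ℂ‖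
            + (‖⟪(Q ∘L Q) (T3 x), y⟫_ℂ‖ + ‖⟪(Q ∘L Q) (T4 y), y⟫_ℂ‖) :=
        (norm_add_le _ _).trans (add_le_add (norm_add_le _ _) (norm_add_le _ _))
      nlinarith [mul_le_mul_of_nonneg_left mxx hc1, mul_le_mul_of_nonneg_left myx hc2,
        mul_le_mul_of_nonneg_left mxy hc3, mul_le_mul_of_nonneg_left myy hc4]
    have hW0 : 0 ≤ wB (Q ∘L Q) T1 T2 T3 T4 := by
      obtain ⟨x, y, hxy⟩ := hex
      have hmem : ‖⟪(Q ∘L Q) (T1 x + T2 y), x⟫_ℂ + ⟪(Q ∘L Q) (T3 x + T4 y), y⟫_ℂ‖ ∈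
          {r : ℝ | ∃ x y : H,
            Real.sqrt ((⟪(Q ∘L Q) x, x⟫_ℂ).re + (⟪(Q ∘L Q) y, y⟫_ℂ).re) = 1 ∧
            r = ‖⟪(Q ∘L Q) (T1 x + T2 y), x⟫_ℂ + ⟪(Q ∘L Q) (T3 x + T4 y), y⟫_ℂ‖} :=
        ⟨x, y, hxy, rfl⟩
      exact le_trans (norm_nonneg _) (le_csSup bdd hmem)
    apply Real.sSup_le _ hW0
    rintro r ⟨x, y, hxy, rfl⟩
    have hxy' : Real.sqrt ((⟪(Q ∘L Q) x, x⟫_ℂ).re + (⟪(Q ∘L Q) (-y), -y⟫_ℂ).re) = 1 := by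
      rw [map_neg]
      simpa [inner_neg_neg] using hxy
    have le1 : ‖⟪(Q ∘L Q) (T1 x + T2 y), x⟫_ℂ + ⟪(Q ∘L Q) (T3 x + T4 y), y⟫_ℂ‖
        ≤ wB (Q ∘L Q) T1 T2 T3 T4 := le_csSup bdd ⟨x, y, hxy, rfl⟩
    have le2 : ‖⟪(Q ∘L Q) (T1 x + T2 (-y)), x⟫_ℂ + ⟪(Q ∘L Q) (T3 x + T4 (-y)), -y⟫_ℂ‖
        ≤ wB (Q ∘L Q) T1 T2 T3 T4 := le_csSup bdd ⟨x, -y, hxy', rfl⟩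
    have key : ⟪(Q ∘L Q) ((0 : H →L[ℂ] H) x + T2 y), x⟫_ℂ
          + ⟪(Q ∘L Q) (T3 x + (0 : H →L[ℂ] H) y), y⟫_ℂ
        = ((⟪(Q ∘L Q) (T1 x + T2 y), x⟫_ℂ + ⟪(Q ∘L Q) (T3 x + T4 y), y⟫_ℂ)
          - (⟪(Q ∘L Q) (T1 x + T2 (-y)), x⟫_ℂ + ⟪(Q ∘L Q) (T3 x + T4 (-y)), -y⟫_ℂ)) / 2 := by
      have d1 : ⟪(Q ∘L Q) ((0 : H →L[ℂ] H) x + T2 y), x⟫_ℂ = ⟪(Q ∘L Q) (T2 y), x⟫_ℂ := by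
        rw [ContinuousLinearMap.zero_apply, zero_add]
      have d2 : ⟪(Q ∘L Q) (T3 x + (0 : H →L[ℂ] H) y), y⟫_ℂ = ⟪(Q ∘L Q) (T3 x), y⟫_ℂ := by
        rw [ContinuousLinearMap.zero_apply, add_zero]
      have d3 : ⟪(Q ∘L Q) (T1 x + T2 y), x⟫_ℂ
          = ⟪(Q ∘L Q) (T1 x), x⟫_ℂ + ⟪(Q ∘L Q) (T2 y), x⟫_ℂ := by
        rw [map_add, inner_add_left]
      have d4 : ⟪(Q ∘L Q) (T3 x + T4 y), y⟫_ℂ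
          = ⟪(Q ∘L Q) (T3 x), y⟫_ℂ + ⟪(Q ∘L Q) (T4 y), y⟫_ℂ := by
        rw [map_add, inner_add_left]
      have d5 : ⟪(Q ∘L Q) (T1 x + T2 (-y)), x⟫_ℂ
          = ⟪(Q ∘L Q) (T1 x), x⟫_ℂ - ⟪(Q ∘L Q) (T2 y), x⟫_ℂ := by
        rw [map_neg, ← sub_eq_add_neg, map_sub, inner_sub_left]
      have d6 : ⟪(Q ∘L Q) (T3 x + T4 (-y)), -y⟫_ℂ
          = -⟪(Q ∘L Q) (T3 x), y⟫_ℂ + ⟪(Q ∘L Q) (T4 y), y⟫_ℂ := by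
        rw [map_neg, ← sub_eq_add_neg, map_sub, inner_sub_left, inner_neg_right,
          inner_neg_right]
        ring
      rw [d1, d2, d3, d4, d5, d6]
      ring
    rw [key]
    set F1 := ⟪(Q ∘L Q) (T1 x + T2 y), x⟫_ℂ + ⟪(Q ∘L Q) (T3 x + T4 y), y⟫_ℂ
    set F2 := ⟪(Q ∘L Q) (T1 x + T2 (-y)), x⟫_ℂ + ⟪(Q ∘L Q) (T3 x + T4 (-y)), -y⟫_ℂ
    calc ‖(F1 - F2) / 2‖ = ‖F1 - F2‖ / 2 := by rw [norm_div]; norm_num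
      _ ≤ (‖F1‖ + ‖F2‖) / 2 := by
          have := norm_sub_le F1 F2
          linarith
      _ ≤ (wB (Q ∘L Q) T1 T2 T3 T4 + wB (Q ∘L Q) T1 T2 T3 T4) / 2 := by linarith
      _ = wB (Q ∘L Q) T1 T2 T3 T4 := by ring
  · have hempty : ∀ b1 b2 b3 b4 : H →L[ℂ] H, wB (Q ∘L Q) b1 b2 b3 b4 = 0 := by
      intro b1 b2 b3 b4
      unfold wB
      convert Real.sSup_empty
      ext r
      simp only [Set.mem_setOf_eq, Set.mem_empty_iff_false, iff_false, not_exists]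
      rintro x y ⟨h, _⟩
      exact hex ⟨x, y, h⟩
    rw [hempty, hempty]
end

section
/- Let A be strictly positive and let T1, T2 be bounded linear operators on H each admitting an A-adjoint (i.e. for each i there exists S_i with A∘S_i = T_i*∘A). Then max{w_A(T1), w_A(T2)} ≤ w_B([[T1,T2],[-T2,-T1]]) ≤ w_A(T1) + w_A(T2). -/
open scoped InnerProductSpace
open ContinuousLinearMap

set_option linter.unusedSectionVars false
set_option maxHeartbeats 1000000

variable {H : Type*} [NormedAddCommGroup H] [InnerProductSpace ℂ H] [CompleteSpace H]

section basics
variable {A : H →L[ℂ] H} (hA : A.IsPositive)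
include hA

lemma aSelf (x y : H) : ⟪x, A y⟫_ℂ = ⟪A x, y⟫_ℂ := by
  have h := hA.isSelfAdjoint
  rw [ContinuousLinearMap.isSelfAdjoint_iff'] at h
  rw [← ContinuousLinearMap.adjoint_inner_left, h]

lemma aRe_nonneg (x : H) : 0 ≤ (⟪A x, x⟫_ℂ).re := hA.re_inner_nonneg_left x

noncomputable def aCore : PreInnerProductSpace.Core ℂ H where
  inner x y := ⟪A x, y⟫_ℂ
  conj_inner_symm x y := by
    show (starRingEnd ℂ) ⟪A y, x⟫_ℂ = ⟪A x, y⟫_ℂ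
    rw [inner_conj_symm, aSelf hA]
  re_inner_nonneg x := hA.re_inner_nonneg_left x
  add_left x y z := by
    show ⟪A (x + y), z⟫_ℂ = ⟪A x, z⟫_ℂ + ⟪A y, z⟫_ℂ
    rw [map_add, inner_add_left]
  smul_left x y r := by
    show ⟪A (r • x), y⟫_ℂ = (starRingEnd ℂ) r * ⟪A x, y⟫_ℂ
    rw [map_smul, inner_smul_left]

lemma aCS (x y : H) : ‖⟪A x, y⟫_ℂ‖ ≤ aNorm A x * aNorm A y := by
  have h := @InnerProductSpace.Core.inner_mul_inner_self_le ℂ H _ _ _ (aCore hA) x y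
  have h2 : ‖⟪A y, x⟫_ℂ‖ = ‖⟪A x, y⟫_ℂ‖ := by
    rw [← aSelf hA, ← inner_conj_symm]; exact RCLike.norm_conj _
  change ‖⟪A x, y⟫_ℂ‖ * ‖⟪A y, x⟫_ℂ‖ ≤ (⟪A x, x⟫_ℂ).re * (⟪A y, y⟫_ℂ).re at h
  rw [h2, ← sq] at h
  have := Real.sqrt_le_sqrt h
  rwa [Real.sqrt_sq (norm_nonneg _), Real.sqrt_mul (aRe_nonneg hA x)] at this

lemma aNorm_sq (x : H) : aNorm A x ^ 2 = (⟪A x, x⟫_ℂ).re :=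
  Real.sq_sqrt (aRe_nonneg hA x)

end basics

lemma aNorm_nonneg (A : H →L[ℂ] H) (x : H) : 0 ≤ aNorm A x := Real.sqrt_nonneg _

lemma aNorm_zero (A : H →L[ℂ] H) : aNorm A 0 = 0 := by
  simp [aNorm]

lemma aNorm_le_norm (A : H →L[ℂ] H) (z : H) : aNorm A z ≤ Real.sqrt ‖A‖ * ‖z‖ := by
  have h1 : (⟪A z, z⟫_ℂ).re ≤ ‖A‖ * (‖z‖ * ‖z‖) := by
    calc (⟪A z, z⟫_ℂ).re ≤ ‖⟪A z, z⟫_ℂ‖ := Complex.re_le_norm _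
    _ ≤ ‖A z‖ * ‖z‖ := norm_inner_le_norm _ _
    _ ≤ ‖A‖ * ‖z‖ * ‖z‖ := by
        exact mul_le_mul_of_nonneg_right (A.le_opNorm z) (norm_nonneg z)
    _ = ‖A‖ * (‖z‖ * ‖z‖) := by ring
  calc aNorm A z ≤ Real.sqrt (‖A‖ * (‖z‖ * ‖z‖)) := Real.sqrt_le_sqrt h1
  _ = Real.sqrt ‖A‖ * ‖z‖ := by
      rw [Real.sqrt_mul (norm_nonneg A), Real.sqrt_mul_self (norm_nonneg z)]

/-- alternating iterate -/
noncomputable def altIter (T S : H →L[ℂ] H) (x : H) : ℕ → H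
  | 0 => x
  | n+1 => (if Even n then T else S) (altIter T S x n)

section bdd
variable {A T S : H →L[ℂ] H} (hA : A.IsPositive)
  (hS : A ∘L S = (ContinuousLinearMap.adjoint T) ∘L A)
include hA hS

lemma aKey1 (u v : H) : ⟪A (S u), v⟫_ℂ = ⟪A u, T v⟫_ℂ := by
  have := congrArg (fun R : H →L[ℂ] H => R u) hS
  simp only [ContinuousLinearMap.comp_apply] at this
  rw [this, ContinuousLinearMap.adjoint_inner_left]

lemma aKey2 (u v : H) : ⟪A (T u), v⟫_ℂ = ⟪A u, S v⟫_ℂ := by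
  calc ⟪A (T u), v⟫_ℂ = (starRingEnd ℂ) ⟪v, A (T u)⟫_ℂ := (inner_conj_symm _ _).symm
  _ = (starRingEnd ℂ) ⟪A v, T u⟫_ℂ := by rw [aSelf hA]
  _ = (starRingEnd ℂ) ⟪A (S v), u⟫_ℂ := by rw [aKey1 hA hS]
  _ = ⟪u, A (S v)⟫_ℂ := by rw [inner_conj_symm, aSelf hA]
  _ = ⟪A u, S v⟫_ℂ := aSelf hA _ _

lemma altIter_rec (x : H) (n : ℕ) :
    aNorm A (altIter T S x (n+1)) ^ 2 ≤ aNorm A (altIter T S x n) * aNorm A (altIter T S x (n+2)) := by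
  rcases Nat.even_or_odd n with he | ho
  · have h1 : altIter T S x (n+1) = T (altIter T S x n) := by simp [altIter, he]
    have h2 : altIter T S x (n+2) = S (altIter T S x (n+1)) := by
      have : ¬ Even (n+1) := Nat.even_add_one.not_left.mpr ?_
      · simp [altIter, this]
      · simpa using he
    rw [h1, h2, h1, aNorm_sq hA]
    calc (⟪A (T (altIter T S x n)), T (altIter T S x n)⟫_ℂ).re
        = (⟪A (altIter T S x n), S (T (altIter T S x n))⟫_ℂ).re := by rw [aKey2 hA hS]
      _ ≤ ‖⟪A (altIter T S x n), S (T (altIter T S x n))⟫_ℂ‖ := Complex.re_le_norm _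
      _ ≤ aNorm A (altIter T S x n) * aNorm A (S (T (altIter T S x n))) := aCS hA _ _
  · have hne : ¬ Even n := Nat.not_even_iff_odd.mpr ho
    have h1 : altIter T S x (n+1) = S (altIter T S x n) := by simp [altIter, hne]
    have h2 : altIter T S x (n+2) = T (altIter T S x (n+1)) := by
      have : Even (n+1) := ho.add_one
      simp [altIter, this]
    rw [h1, h2, h1, aNorm_sq hA]
    calc (⟪A (S (altIter T S x n)), S (altIter T S x n)⟫_ℂ).re
        = (⟪A (altIter T S x n), T (S (altIter T S x n))⟫_ℂ).re := by rw [aKey1 hA hS]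
      _ ≤ ‖⟪A (altIter T S x n), T (S (altIter T S x n))⟫_ℂ‖ := Complex.re_le_norm _
      _ ≤ aNorm A (altIter T S x n) * aNorm A (T (S (altIter T S x n))) := aCS hA _ _

end bdd




lemma altIter_norm_le (T S : H →L[ℂ] H) (x : H) (n : ℕ) :
    ‖altIter T S x n‖ ≤ (max (max ‖T‖ ‖S‖) 1)^n * ‖x‖ := by
  set M := max (max ‖T‖ ‖S‖) 1 with hM
  have hM1 : (1:ℝ) ≤ M := le_max_right _ _
  have hM0 : (0:ℝ) ≤ M := le_trans zero_le_one hM1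
  induction n with
  | zero => simp [altIter]
  | succ n ih =>
      have step : ‖altIter T S x (n+1)‖ ≤ M * ‖altIter T S x n‖ := by
        show ‖(if Even n then T else S) (altIter T S x n)‖ ≤ _
        rcases em (Even n) with h | h
        · simp only [h, if_true]
          exact le_trans (T.le_opNorm _) (mul_le_mul_of_nonneg_right
            (le_trans (le_max_left _ _) (le_max_left _ _)) (norm_nonneg _))
        · simp only [h, if_false]
          exact le_trans (S.le_opNorm _) (mul_le_mul_of_nonneg_right
            (le_trans (le_max_right _ _) (le_max_left _ _)) (norm_nonneg _))
      calc ‖altIter T S x (n+1)‖ ≤ M * ‖altIter T S x n‖ := step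
        _ ≤ M * (M^n * ‖x‖) := mul_le_mul_of_nonneg_left ih hM0
        _ = M^(n+1) * ‖x‖ := by ring

section seq
variable (a : ℕ → ℝ) (ha : ∀ n, 0 ≤ a n) (hrec : ∀ n, a (n+1) ^ 2 ≤ a n * a (n+2))
include ha hrec

lemma seqC : ∀ n, a 1 * a n ≤ a 0 * a (n+1) := by
  intro n
  induction n with
  | zero => rw [mul_comm]
  | succ n ih =>
      rcases eq_or_lt_of_le (ha (n+1)) with h0 | h0
      · rw [← h0, mul_zero]; exact mul_nonneg (ha 0) (ha (n+2))
      · have key : (a 1 * a (n+1)) * a (n+1) ≤ (a 0 * a (n+2)) * a (n+1) := by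
          calc (a 1 * a (n+1)) * a (n+1) = a 1 * (a (n+1) ^2) := by ring
            _ ≤ a 1 * (a n * a (n+2)) := mul_le_mul_of_nonneg_left (hrec n) (ha 1)
            _ = (a 1 * a n) * a (n+2) := by ring
            _ ≤ (a 0 * a (n+1)) * a (n+2) := mul_le_mul_of_nonneg_right ih (ha (n+2))
            _ = (a 0 * a (n+2)) * a (n+1) := by ring
        exact le_of_mul_le_mul_right key h0

lemma seqD : ∀ n, a 1 ^ n * a 0 ≤ a 0 ^ n * a n := by
  intro n
  induction n with
  | zero => simp
  | succ n ih =>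
      calc a 1 ^ (n+1) * a 0 = a 1 * (a 1 ^ n * a 0) := by ring
        _ ≤ a 1 * (a 0 ^ n * a n) := mul_le_mul_of_nonneg_left ih (ha 1)
        _ = a 0 ^ n * (a 1 * a n) := by ring
        _ ≤ a 0 ^ n * (a 0 * a (n+1)) := mul_le_mul_of_nonneg_left (seqC a ha hrec n)
            (pow_nonneg (ha 0) n)
        _ = a 0 ^ (n+1) * a (n+1) := by ring

/-- If a log-convex nonneg sequence with `a 0 > 0` satisfies `a n ≤ K * M ^ n` with `M ≥ 1`,
then `a 1 ≤ M * a 0`. -/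
lemma seqE {M K : ℝ} (hM : 1 ≤ M) (h0 : 0 < a 0) (hbd : ∀ n, a n ≤ K * M ^ n) :
    a 1 ≤ M * a 0 := by
  by_contra hcon
  push_neg at hcon
  have hMa : 0 < M * a 0 := mul_pos (lt_of_lt_of_le zero_lt_one hM) h0
  set q : ℝ := a 1 / (M * a 0) with hq
  have hq1 : 1 < q := (one_lt_div hMa).mpr hcon
  have hqn : ∀ n, q ^ n ≤ K / a 0 := by
    intro n
    rw [hq, div_pow, div_le_div_iff₀ (pow_pos hMa n) h0]
    calc a 1 ^ n * a 0 ≤ a 0 ^ n * a n := seqD a ha hrec n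
      _ ≤ a 0 ^ n * (K * M ^ n) := mul_le_mul_of_nonneg_left (hbd n) (pow_nonneg (ha 0) n)
      _ = K * (M * a 0) ^ n := by rw [mul_pow]; ring
  obtain ⟨n, hn⟩ := pow_unbounded_of_one_lt (K / a 0) hq1
  exact absurd (hqn n) (not_le.mpr hn)

end seq

section bdd2
variable {A T S : H →L[ℂ] H} (hA : A.IsPositive)
  (hS : A ∘L S = (ContinuousLinearMap.adjoint T) ∘L A)
  (hA' : ∀ x : H, x ≠ 0 → 0 < (⟪A x, x⟫_ℂ).re)
include hA hS hA'

lemma aBound (x : H) : aNorm A (T x) ≤ max (max ‖T‖ ‖S‖) 1 * aNorm A x := by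
  set M := max (max ‖T‖ ‖S‖) 1 with hM
  have hM1 : (1:ℝ) ≤ M := le_max_right _ _
  rcases eq_or_ne x 0 with rfl | hx
  · simp [aNorm]
  · set a : ℕ → ℝ := fun n => aNorm A (altIter T S x n) with haa
    have ha : ∀ n, 0 ≤ a n := fun n => Real.sqrt_nonneg _
    have hrec : ∀ n, a (n+1) ^ 2 ≤ a n * a (n+2) := altIter_rec hA hS x
    have h0 : 0 < a 0 := by
      have : 0 < (⟪A x, x⟫_ℂ).re := hA' x hx
      exact Real.sqrt_pos.mpr this
    have hbd : ∀ n, a n ≤ (Real.sqrt ‖A‖ * ‖x‖) * M ^ n := by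
      intro n
      calc a n ≤ Real.sqrt ‖A‖ * ‖altIter T S x n‖ := aNorm_le_norm A _
        _ ≤ Real.sqrt ‖A‖ * (M ^ n * ‖x‖) :=
            mul_le_mul_of_nonneg_left (altIter_norm_le T S x n) (Real.sqrt_nonneg _)
        _ = (Real.sqrt ‖A‖ * ‖x‖) * M ^ n := by ring
    have := seqE a ha hrec hM1 h0 hbd
    have h1 : a 1 = aNorm A (T x) := by
      show aNorm A ((if Even 0 then T else S) (altIter T S x 0)) = _
      simp [altIter]
    rw [h1] at this
    exact this

end bdd2

lemma aNorm_smul (A : H →L[ℂ] H) (z : ℂ) (x : H) : aNorm A (z • x) = ‖z‖ * aNorm A x := by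
  have h : ⟪A (z • x), z • x⟫_ℂ = ((‖z‖^2 : ℝ) : ℂ) * ⟪A x, x⟫_ℂ := by
    rw [map_smul, inner_smul_left, inner_smul_right, ← mul_assoc, RCLike.conj_mul]
    norm_cast
  unfold aNorm
  rw [h, Complex.re_ofReal_mul, Real.sqrt_mul (sq_nonneg _), Real.sqrt_sq (norm_nonneg z)]

lemma polar1 (A T : H →L[ℂ] H) (x y : H) :
    ⟪A (T (x + Complex.I • y)), x + Complex.I • y⟫_ℂ
      - ⟪A (T (x - Complex.I • y)), x - Complex.I • y⟫_ℂ
    = (2*Complex.I) * (⟪A (T x), y⟫_ℂ - ⟪A (T y), x⟫_ℂ) := by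
  simp only [map_add, map_sub, map_smul, inner_add_left, inner_add_right, inner_sub_left,
    inner_sub_right, inner_smul_left, inner_smul_right, Complex.conj_I]
  ring

lemma polar2 (A : H →L[ℂ] H) (x y : H) :
    ⟪A (x + Complex.I • y), x + Complex.I • y⟫_ℂ
      + ⟪A (x - Complex.I • y), x - Complex.I • y⟫_ℂ
    = 2 * ⟪A x, x⟫_ℂ + 2 * ⟪A y, y⟫_ℂ := by
  simp only [map_add, map_sub, map_smul, inner_add_left, inner_add_right, inner_sub_left,
    inner_sub_right, inner_smul_left, inner_smul_right, Complex.conj_I]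
  linear_combination (-2*⟪A y, y⟫_ℂ) * Complex.I_sq

section wa
variable {A T S : H →L[ℂ] H} (hA : A.IsPositive)
  (hS : A ∘L S = (ContinuousLinearMap.adjoint T) ∘L A)
  (hA' : ∀ x : H, x ≠ 0 → 0 < (⟪A x, x⟫_ℂ).re)
include hA hS hA'

lemma wA_bddAbove : BddAbove {r : ℝ | ∃ x : H, aNorm A x = 1 ∧ r = ‖⟪A (T x), x⟫_ℂ‖} := by
  refine ⟨max (max ‖T‖ ‖S‖) 1, fun r hr => ?_⟩
  obtain ⟨x, hx, rfl⟩ := hr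
  calc ‖⟪A (T x), x⟫_ℂ‖ ≤ aNorm A (T x) * aNorm A x := aCS hA _ _
    _ = aNorm A (T x) := by rw [hx, mul_one]
    _ ≤ max (max ‖T‖ ‖S‖) 1 * aNorm A x := aBound hA hS hA' x
    _ = max (max ‖T‖ ‖S‖) 1 := by rw [hx, mul_one]

lemma inner_le_wA (x : H) : ‖⟪A (T x), x⟫_ℂ‖ ≤ wA A T * (⟪A x, x⟫_ℂ).re := by
  rcases eq_or_ne x 0 with rfl | hx
  · simp
  · set c : ℝ := aNorm A x with hc
    have hc0 : 0 < c := Real.sqrt_pos.mpr (hA' x hx)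
    set z : ℂ := ((c : ℂ))⁻¹ with hz
    have hzn : ‖z‖ = c⁻¹ := by
      rw [hz, norm_inv, Complex.norm_real, Real.norm_of_nonneg hc0.le]
    have hmem : ‖⟪A (T (z • x)), z • x⟫_ℂ‖ ∈
        {r : ℝ | ∃ x : H, aNorm A x = 1 ∧ r = ‖⟪A (T x), x⟫_ℂ‖} := by
      refine ⟨z • x, ?_, rfl⟩
      rw [aNorm_smul, hzn, ← hc, inv_mul_cancel₀ hc0.ne']
    have hle := le_csSup (wA_bddAbove hA hS hA') hmem
    have hval : ‖⟪A (T (z • x)), z • x⟫_ℂ‖ = c⁻¹^2 * ‖⟪A (T x), x⟫_ℂ‖ := by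
      rw [map_smul, map_smul, inner_smul_left, inner_smul_right, norm_mul, norm_mul,
        RCLike.norm_conj, hzn]
      ring
    rw [hval] at hle
    have h2 : ‖⟪A (T x), x⟫_ℂ‖ = c^2 * (c⁻¹^2 * ‖⟪A (T x), x⟫_ℂ‖) := by
      field_simp
    rw [h2, ← aNorm_sq hA x, ← hc]
    calc c^2 * (c⁻¹^2 * ‖⟪A (T x), x⟫_ℂ‖) ≤ c^2 * wA A T :=
        mul_le_mul_of_nonneg_left hle (sq_nonneg c)
      _ = wA A T * c^2 := mul_comm _ _

end wa

lemma wA_nonneg (A T : H →L[ℂ] H) : 0 ≤ wA A T :=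
  Real.sSup_nonneg (by rintro r ⟨x, -, rfl⟩; exact norm_nonneg _)

lemma re_smul {A : H →L[ℂ] H} (hA : A.IsPositive) (z : ℂ) (x : H) :
    (⟪A (z • x), z • x⟫_ℂ).re = ‖z‖^2 * (⟪A x, x⟫_ℂ).re := by
  rw [← aNorm_sq hA, ← aNorm_sq hA, aNorm_smul, mul_pow]

lemma val_eq (A T1 T2 : H →L[ℂ] H) (c : ℂ) (hc : (starRingEnd ℂ) c = c)
    (hc2 : c * c = 1/2) (x : H) :
    ⟪A (T1 (c • x) + T2 ((c * Complex.I) • x)), c • x⟫_ℂ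
      + ⟪A ((-T2) (c • x) + (-T1) ((c * Complex.I) • x)), (c * Complex.I) • x⟫_ℂ
    = -Complex.I * ⟪A (T2 x), x⟫_ℂ := by
  simp only [map_add, map_smul, ContinuousLinearMap.neg_apply, map_neg, inner_add_left,
    inner_neg_left, inner_smul_left, inner_smul_right, map_mul, Complex.conj_I, hc]
  linear_combination (c^2*⟪A (T1 x), x⟫_ℂ) * Complex.I_sq +
    (-2*Complex.I*⟪A (T2 x), x⟫_ℂ) * hc2

theorem stmt2 (A T1 T2 : H →L[ℂ] H) (hA : A.IsPositive) (hA' : ∀ x : H, x ≠ 0 → 0 < (⟪A x, x⟫_ℂ).re)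
    (h1 : ∃ S : H →L[ℂ] H, A ∘L S = (ContinuousLinearMap.adjoint T1) ∘L A)
    (h2 : ∃ S : H →L[ℂ] H, A ∘L S = (ContinuousLinearMap.adjoint T2) ∘L A) :
    max (wA A T1) (wA A T2) ≤ wB A T1 T2 (-T2) (-T1) ∧
      wB A T1 T2 (-T2) (-T1) ≤ wA A T1 + wA A T2 := by
  obtain ⟨S1, hS1⟩ := h1
  obtain ⟨S2, hS2⟩ := h2
  set SB := {r : ℝ | ∃ x y : H, Real.sqrt ((⟪A x, x⟫_ℂ).re + (⟪A y, y⟫_ℂ).re) = 1 ∧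
    r = ‖⟪A (T1 x + T2 y), x⟫_ℂ + ⟪A ((-T2) x + (-T1) y), y⟫_ℂ‖} with hSBdef
  have hwB : wB A T1 T2 (-T2) (-T1) = sSup SB := rfl
  -- upper bound for every element of SB
  have hup : ∀ r ∈ SB, r ≤ wA A T1 + wA A T2 := by
    rintro r ⟨x, y, hxy, rfl⟩
    have hsum : (⟪A x, x⟫_ℂ).re + (⟪A y, y⟫_ℂ).re = 1 := Real.sqrt_eq_one.mp hxy
    set p := (⟪A x, x⟫_ℂ).re with hp
    set q := (⟪A y, y⟫_ℂ).re with hq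
    have hval : ⟪A (T1 x + T2 y), x⟫_ℂ + ⟪A ((-T2) x + (-T1) y), y⟫_ℂ
        = (⟪A (T1 x), x⟫_ℂ - ⟪A (T1 y), y⟫_ℂ) + (⟪A (T2 y), x⟫_ℂ - ⟪A (T2 x), y⟫_ℂ) := by
      simp only [map_add, inner_add_left, ContinuousLinearMap.neg_apply, map_neg, inner_neg_left]
      ring
    have b1 := inner_le_wA hA hS1 hA' x
    have b2 := inner_le_wA hA hS1 hA' y
    -- cross term bound
    have b3 : ‖⟪A (T2 y), x⟫_ℂ - ⟪A (T2 x), y⟫_ℂ‖ * 2 ≤ wA A T2 * (2*p + 2*q) := by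
      set u := x + Complex.I • y with hu
      set v := x - Complex.I • y with hv
      have e1 : ⟪A (T2 u), u⟫_ℂ - ⟪A (T2 v), v⟫_ℂ
          = (2*Complex.I) * (⟪A (T2 x), y⟫_ℂ - ⟪A (T2 y), x⟫_ℂ) := polar1 A T2 x y
      have e2 : (⟪A u, u⟫_ℂ).re + (⟪A v, v⟫_ℂ).re = 2*p + 2*q := by
        calc (⟪A u, u⟫_ℂ).re + (⟪A v, v⟫_ℂ).re = (⟪A u, u⟫_ℂ + ⟪A v, v⟫_ℂ).re :=
            (Complex.add_re _ _).symm
          _ = (2 * ⟪A x, x⟫_ℂ + 2 * ⟪A y, y⟫_ℂ).re := by rw [hu, hv, polar2]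
          _ = 2*p + 2*q := by simp [Complex.add_re, Complex.mul_re, hp, hq]
      have c1 := inner_le_wA hA hS2 hA' u
      have c2 := inner_le_wA hA hS2 hA' v
      calc ‖⟪A (T2 y), x⟫_ℂ - ⟪A (T2 x), y⟫_ℂ‖ * 2
          = ‖(2*Complex.I) * (⟪A (T2 x), y⟫_ℂ - ⟪A (T2 y), x⟫_ℂ)‖ := by
            rw [norm_mul, ← norm_neg (⟪A (T2 x), y⟫_ℂ - ⟪A (T2 y), x⟫_ℂ)]
            simp [Complex.norm_I, mul_comm]
        _ = ‖⟪A (T2 u), u⟫_ℂ - ⟪A (T2 v), v⟫_ℂ‖ := by rw [e1]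
        _ ≤ ‖⟪A (T2 u), u⟫_ℂ‖ + ‖⟪A (T2 v), v⟫_ℂ‖ := norm_sub_le _ _
        _ ≤ wA A T2 * (⟪A u, u⟫_ℂ).re + wA A T2 * (⟪A v, v⟫_ℂ).re := add_le_add c1 c2
        _ = wA A T2 * ((⟪A u, u⟫_ℂ).re + (⟪A v, v⟫_ℂ).re) := by ring
        _ = wA A T2 * (2*p + 2*q) := by rw [e2]
    rw [hval]
    calc ‖(⟪A (T1 x), x⟫_ℂ - ⟪A (T1 y), y⟫_ℂ) + (⟪A (T2 y), x⟫_ℂ - ⟪A (T2 x), y⟫_ℂ)‖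
        ≤ ‖⟪A (T1 x), x⟫_ℂ - ⟪A (T1 y), y⟫_ℂ‖ + ‖⟪A (T2 y), x⟫_ℂ - ⟪A (T2 x), y⟫_ℂ‖ :=
          norm_add_le _ _
      _ ≤ (‖⟪A (T1 x), x⟫_ℂ‖ + ‖⟪A (T1 y), y⟫_ℂ‖) + ‖⟪A (T2 y), x⟫_ℂ - ⟪A (T2 x), y⟫_ℂ‖ :=
          add_le_add_left (norm_sub_le _ _) _
      _ ≤ (wA A T1 * p + wA A T1 * q) + wA A T2 * (p + q) := by
          have h3 : ‖⟪A (T2 y), x⟫_ℂ - ⟪A (T2 x), y⟫_ℂ‖ ≤ wA A T2 * (p + q) := by linarith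
          exact add_le_add (add_le_add b1 b2) h3
      _ = (wA A T1 + wA A T2) * (p + q) := by ring
      _ = wA A T1 + wA A T2 := by rw [hsum, mul_one]
  have hBdd : BddAbove SB := ⟨wA A T1 + wA A T2, hup⟩
  have hSBnonneg : (0:ℝ) ≤ sSup SB :=
    Real.sSup_nonneg (by rintro r ⟨x, y, -, rfl⟩; exact norm_nonneg _)
  constructor
  · rw [hwB]
    refine max_le ?_ ?_
    · refine Real.sSup_le ?_ hSBnonneg
      rintro r ⟨x, hx, rfl⟩
      refine le_csSup hBdd ⟨x, 0, ?_, ?_⟩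
      · simpa [aNorm] using hx
      · simp
    · refine Real.sSup_le ?_ hSBnonneg
      rintro r ⟨x, hx, rfl⟩
      set c : ℂ := (Real.sqrt 2 : ℂ)⁻¹ with hcdef
      have hc : (starRingEnd ℂ) c = c := by
        rw [hcdef, map_inv₀, Complex.conj_ofReal]
      have hc2 : c * c = 1/2 := by
        have h22 : (Real.sqrt 2 : ℂ) * (Real.sqrt 2 : ℂ) = 2 := by
          norm_cast
          exact Real.mul_self_sqrt (by norm_num)
        rw [hcdef, ← mul_inv, h22]
        norm_num
      have hcn : ‖c‖^2 = 1/2 := by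
        rw [hcdef, norm_inv, Complex.norm_real, Real.norm_of_nonneg (Real.sqrt_nonneg 2),
          inv_pow, Real.sq_sqrt (by norm_num : (0:ℝ) ≤ 2)]
        norm_num
      have hcn2 : ‖c * Complex.I‖^2 = 1/2 := by
        rw [norm_mul, Complex.norm_I, mul_one, hcn]
      refine le_csSup hBdd ⟨c • x, (c * Complex.I) • x, ?_, ?_⟩
      · rw [re_smul hA, re_smul hA, hcn, hcn2]
        have hx1 : (⟪A x, x⟫_ℂ).re = 1 := by
          have := congrArg (·^2) hx
          simpa [aNorm_sq hA] using this
        rw [hx1]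
        norm_num
      · rw [val_eq A T1 T2 c hc hc2 x, norm_mul]
        simp [Complex.norm_I]
  · rw [hwB]
    exact Real.sSup_le hup (add_nonneg (wA_nonneg A T1) (wA_nonneg A T2))
end

section
/- Let A be strictly positive and let T1, T2 be bounded linear operators on H each admitting an A-adjoint (i.e. for each i there exists S_i with A∘S_i = T_i*∘A). Then w_B([[T2,-T1],[T1,T2]]) = max{w_A(T1 + iT2), w_A(T1 - iT2)}. -/
open scoped InnerProductSpace
open ContinuousLinearMap

variable {H : Type*} [NormedAddCommGroup H] [InnerProductSpace ℂ H] [CompleteSpace H]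

-- Cauchy-Schwarz for the semi-inner product given by a positive operator
lemma acs (A : H →L[ℂ] H) (hA : A.IsPositive) (x y : H) :
    ‖⟪A x, y⟫_ℂ‖ ^ 2 ≤ (⟪A x, x⟫_ℂ).re * (⟪A y, y⟫_ℂ).re := by
  have hsa : ∀ u v : H, ⟪A u, v⟫_ℂ = ⟪u, A v⟫_ℂ := by
    intro u v
    conv_lhs => rw [← hA.isSelfAdjoint.adjoint_eq]
    exact ContinuousLinearMap.adjoint_inner_left A v u
  let c : PreInnerProductSpace.Core ℂ H :=
    { inner := fun u v => ⟪A u, v⟫_ℂ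
      conj_inner_symm := by
        intro u v
        show (starRingEnd ℂ) ⟪A v, u⟫_ℂ = ⟪A u, v⟫_ℂ
        rw [hsa v u, ← inner_conj_symm]; exact Complex.conj_conj _
      re_inner_nonneg := fun u => hA.re_inner_nonneg_left u
      add_left := by intro u v w; simp [inner_add_left, map_add]
      smul_left := by intro u v r; simp [inner_smul_left, map_smul]; ring }
  have h := @InnerProductSpace.Core.inner_mul_inner_self_le ℂ H _ _ _ c x y
  have hxy : ‖⟪A y, x⟫_ℂ‖ = ‖⟪A x, y⟫_ℂ‖ := by
    rw [hsa y x, ← inner_conj_symm]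
    exact RCLike.norm_conj _
  calc ‖⟪A x, y⟫_ℂ‖ ^ 2 = ‖⟪A x, y⟫_ℂ‖ * ‖⟪A y, x⟫_ℂ‖ := by rw [hxy, sq]
  _ ≤ (⟪A x, x⟫_ℂ).re * (⟪A y, y⟫_ℂ).re := h


lemma hsa_lemma (A : H →L[ℂ] H) (hA : A.IsPositive) (u v : H) : ⟪A u, v⟫_ℂ = ⟪u, A v⟫_ℂ := by
  conv_lhs => rw [← hA.isSelfAdjoint.adjoint_eq]
  exact ContinuousLinearMap.adjoint_inner_left A v u

lemma norm_symm (A : H →L[ℂ] H) (hA : A.IsPositive) (u v : H) :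
    ‖⟪A u, v⟫_ℂ‖ = ‖⟪A v, u⟫_ℂ‖ := by
  rw [hsa_lemma A hA u v, ← inner_conj_symm]
  exact RCLike.norm_conj _

-- A-boundedness from A-adjointability
lemma abound_s3 (A S T : H →L[ℂ] H) (hA : A.IsPositive)
    (hA' : ∀ x : H, x ≠ 0 → 0 < (⟪A x, x⟫_ℂ).re)
    (rel1 : ∀ u v : H, ⟪A (T u), v⟫_ℂ = ⟪A u, S v⟫_ℂ) (x : H) :
    (⟪A (T x), T x⟫_ℂ).re ≤ ‖S ∘L T‖ * (⟪A x, x⟫_ℂ).re := by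
  have hsa := hsa_lemma A hA
  set K := S ∘L T with hK
  have relK : ∀ u v : H, ⟪A (K u), v⟫_ℂ = ⟪A u, K v⟫_ℂ := by
    intro u v
    have h2 : ∀ w z : H, ⟪A (S w), z⟫_ℂ = ⟪A w, T z⟫_ℂ := by
      intro w z
      calc ⟪A (S w), z⟫_ℂ = (starRingEnd ℂ) ⟪A z, S w⟫_ℂ := by
            rw [hsa (S w) z, ← inner_conj_symm, hsa z (S w)]
      _ = (starRingEnd ℂ) ⟪A (T z), w⟫_ℂ := by rw [rel1 z w]
      _ = ⟪A w, T z⟫_ℂ := by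
            rw [hsa (T z) w, inner_conj_symm]
    calc ⟪A (K u), v⟫_ℂ = ⟪A (S (T u)), v⟫_ℂ := rfl
    _ = ⟪A (T u), T v⟫_ℂ := h2 (T u) v
    _ = ⟪A u, S (T v)⟫_ℂ := rel1 u (T v)
    _ = ⟪A u, K v⟫_ℂ := rfl
  have relKn : ∀ n : ℕ, ∀ u v : H, ⟪A ((K ^ n) u), v⟫_ℂ = ⟪A u, (K ^ n) v⟫_ℂ := by
    intro n
    induction n with
    | zero => intro u v; simp
    | succ m ih =>
      intro u v
      have comm : ∀ w : H, K ((K ^ m) w) = (K ^ m) (K w) := by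
        intro w
        rw [← ContinuousLinearMap.mul_apply, ← pow_succ', pow_succ,
          ContinuousLinearMap.mul_apply]
      have e1 : (K ^ (m + 1)) u = (K ^ m) (K u) := by
        rw [pow_succ', ContinuousLinearMap.mul_apply, comm u]
      rw [e1, ih (K u) v, relK u ((K ^ m) v)]
      congr 1
      rw [← ContinuousLinearMap.mul_apply, ← pow_succ']
  set N := (⟪A x, x⟫_ℂ).re with hN
  have hN0 : 0 ≤ N := hA.re_inner_nonneg_left x
  set b : ℕ → ℝ := fun n => ‖⟪A ((K ^ n) x), x⟫_ℂ‖ with hb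
  have hb0 : ∀ n, 0 ≤ b n := fun n => norm_nonneg _
  -- step inequality
  have step : ∀ n, (b n) ^ 2 ≤ N * b (2 * n) := by
    intro n
    have h1 := acs A hA ((K ^ n) x) x
    have h2 : ⟪A ((K ^ n) x), (K ^ n) x⟫_ℂ = ⟪A x, (K ^ (2 * n)) x⟫_ℂ := by
      rw [relKn n x ((K ^ n) x)]
      congr 1
      rw [two_mul, pow_add]
      rfl
    have h3 : (⟪A ((K ^ n) x), (K ^ n) x⟫_ℂ).re ≤ b (2 * n) := by
      rw [h2]
      calc (⟪A x, (K ^ (2 * n)) x⟫_ℂ).re ≤ ‖⟪A x, (K ^ (2 * n)) x⟫_ℂ‖ := Complex.re_le_norm _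
      _ = ‖⟪A ((K ^ (2 * n)) x), x⟫_ℂ‖ := (norm_symm A hA _ _).symm
    calc (b n) ^ 2 ≤ (⟪A ((K ^ n) x), (K ^ n) x⟫_ℂ).re * N := h1
    _ ≤ b (2 * n) * N := by
        apply mul_le_mul_of_nonneg_right h3 hN0
    _ = N * b (2 * n) := mul_comm _ _
  set C := ‖A‖ * ‖x‖ ^ 2 with hC
  have hC0 : 0 ≤ C := by positivity
  set r := ‖K‖ with hr
  have hr0 : 0 ≤ r := norm_nonneg _
  have growth : ∀ n, b n ≤ C * r ^ n := by
    intro n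
    calc b n ≤ ‖A ((K ^ n) x)‖ * ‖x‖ := norm_inner_le_norm _ _
    _ ≤ (‖A‖ * ‖(K ^ n) x‖) * ‖x‖ := by
        apply mul_le_mul_of_nonneg_right (A.le_opNorm _) (norm_nonneg _)
    _ ≤ (‖A‖ * (‖K ^ n‖ * ‖x‖)) * ‖x‖ := by
        have := (K ^ n).le_opNorm x
        gcongr
    _ ≤ (‖A‖ * (‖K‖ ^ n * ‖x‖)) * ‖x‖ := by
        have h : ‖K ^ n‖ ≤ ‖K‖ ^ n := by
          rcases Nat.eq_zero_or_pos n with rfl | hn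
          · rw [pow_zero, pow_zero]; exact ContinuousLinearMap.norm_id_le
          · exact norm_pow_le' K hn
        gcongr
    _ = C * r ^ n := by ring
  -- induction: b 1 ^ (2 ^ k) ≤ N ^ (2 ^ k - 1) * b (2 ^ k)
  have main : ∀ k : ℕ, (b 1) ^ (2 ^ k) ≤ N ^ (2 ^ k - 1) * b (2 ^ k) := by
    intro k
    induction k with
    | zero => simpa using le_refl (b 1)
    | succ m ih =>
      have h2m : 1 ≤ 2 ^ m := Nat.one_le_two_pow
      have e1 : (b 1) ^ (2 ^ (m + 1)) = ((b 1) ^ (2 ^ m)) ^ 2 := by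
        rw [← pow_mul, pow_succ]
      have e2 : ((b 1) ^ (2 ^ m)) ^ 2 ≤ (N ^ (2 ^ m - 1) * b (2 ^ m)) ^ 2 := by
        apply pow_le_pow_left₀ (by positivity) ih
      have e3 : (N ^ (2 ^ m - 1) * b (2 ^ m)) ^ 2 = N ^ (2 * (2 ^ m - 1)) * (b (2 ^ m)) ^ 2 := by
        rw [mul_pow, ← pow_mul, mul_comm (2 ^ m - 1) 2]
      have e4 : (b (2 ^ m)) ^ 2 ≤ N * b (2 * 2 ^ m) := step (2 ^ m)
      have e5 : N ^ (2 * (2 ^ m - 1)) * (N * b (2 * 2 ^ m)) = N ^ (2 ^ (m+1) - 1) * b (2 ^ (m+1)) := by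
        rw [← mul_assoc, ← pow_succ]
        congr 2
        · omega
        · rw [pow_succ, mul_comm]
      calc (b 1) ^ (2 ^ (m+1)) = ((b 1) ^ (2 ^ m)) ^ 2 := e1
      _ ≤ (N ^ (2 ^ m - 1) * b (2 ^ m)) ^ 2 := e2
      _ = N ^ (2 * (2 ^ m - 1)) * (b (2 ^ m)) ^ 2 := e3
      _ ≤ N ^ (2 * (2 ^ m - 1)) * (N * b (2 * 2 ^ m)) := by
          apply mul_le_mul_of_nonneg_left e4 (by positivity)
      _ = N ^ (2 ^ (m+1) - 1) * b (2 ^ (m+1)) := e5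
  -- conclude b 1 ≤ N * r
  have key : b 1 ≤ N * r := by
    by_contra hlt
    push_neg at hlt
    have hb1 : 0 < b 1 := lt_of_le_of_lt (by positivity) hlt
    have hNpos : 0 < N := by
      rcases eq_or_ne x 0 with rfl | hx
      · exfalso
        have hz : b 1 = 0 := by simp [hb]
        rw [hz] at hb1
        exact lt_irrefl 0 hb1
      · exact hA' x hx
    have hrpos : 0 < r := by
      by_contra hr'
      push_neg at hr'
      have : r = 0 := le_antisymm hr' hr0
      have h2 := step 1
      have h3 := growth 2
      rw [this] at h3
      simp at h3
      nlinarith [hb0 2, step 1, hb0 1]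
    set q := b 1 / (N * r) with hq
    have hq1 : 1 < q := by
      rw [hq, lt_div_iff₀ (by positivity)]
      linarith
    have qbound : ∀ k : ℕ, q ^ (2 ^ k) * N ≤ C := by
      intro k
      have h1 := main k
      have h2 := growth (2 ^ k)
      have h3 : (b 1) ^ (2 ^ k) ≤ N ^ (2 ^ k - 1) * (C * r ^ (2 ^ k)) := by
        calc (b 1) ^ (2 ^ k) ≤ N ^ (2 ^ k - 1) * b (2 ^ k) := h1
        _ ≤ N ^ (2 ^ k - 1) * (C * r ^ (2 ^ k)) := by
            apply mul_le_mul_of_nonneg_left h2 (by positivity)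
      have hb1eq : b 1 = q * (N * r) := by
        rw [hq, div_mul_cancel₀ _ (mul_pos hNpos hrpos).ne']
      rw [hb1eq, mul_pow, mul_pow] at h3
      have h2k : 1 ≤ 2 ^ k := Nat.one_le_two_pow
      have hNpow : N ^ (2 ^ k) = N ^ (2 ^ k - 1) * N := by
        rw [← pow_succ]
        congr 1
        omega
      rw [hNpow] at h3
      have hpos : 0 < N ^ (2 ^ k - 1) * r ^ (2 ^ k) := by positivity
      nlinarith [pow_pos hNpos (2 ^ k - 1), pow_pos hrpos (2 ^ k)]
    -- contradiction : q^m → ∞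
    obtain ⟨n, hn⟩ : ∃ n : ℕ, C / N < q ^ n := pow_unbounded_of_one_lt (C / N) hq1
    have hmono : q ^ n ≤ q ^ (2 ^ n) := by
      apply pow_le_pow_right₀ (le_of_lt hq1)
      exact (Nat.lt_two_pow_self (n := n)).le
    have := qbound n
    rw [div_lt_iff₀ hNpos] at hn
    nlinarith
  -- finish
  have final : (⟪A (T x), T x⟫_ℂ).re ≤ b 1 := by
    have h1 : ⟪A (T x), T x⟫_ℂ = ⟪A x, K x⟫_ℂ := rel1 x (T x)
    rw [h1]
    calc (⟪A x, K x⟫_ℂ).re ≤ ‖⟪A x, K x⟫_ℂ‖ := Complex.re_le_norm _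
    _ = ‖⟪A (K x), x⟫_ℂ‖ := (norm_symm A hA _ _).symm
    _ = b 1 := by simp [hb]
  calc (⟪A (T x), T x⟫_ℂ).re ≤ b 1 := final
  _ ≤ N * r := key
  _ = ‖S ∘L T‖ * N := mul_comm _ _

-- relation from comp hypothesis
lemma rel_of_comp (A S T : H →L[ℂ] H) (hA : A.IsPositive)
    (hS : A ∘L S = (ContinuousLinearMap.adjoint T) ∘L A) (u v : H) :
    ⟪A (T u), v⟫_ℂ = ⟪A u, S v⟫_ℂ := by
  have hsa := hsa_lemma A hA
  have h1 : ⟪A u, S v⟫_ℂ = ⟪u, A (S v)⟫_ℂ := hsa u (S v)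
  have h2 : A (S v) = (ContinuousLinearMap.adjoint T) (A v) := by
    have := congrArg (fun f : H →L[ℂ] H => f v) hS
    simpa using this
  rw [h1, h2, ContinuousLinearMap.adjoint_inner_right, ← hsa (T u) v]

-- pointwise bound for the numerical radius quantity
lemma pointBound (A S T : H →L[ℂ] H) (hA : A.IsPositive)
    (hA' : ∀ x : H, x ≠ 0 → 0 < (⟪A x, x⟫_ℂ).re)
    (rel1 : ∀ u v : H, ⟪A (T u), v⟫_ℂ = ⟪A u, S v⟫_ℂ) (x : H) :
    ‖⟪A (T x), x⟫_ℂ‖ ≤ Real.sqrt ‖S ∘L T‖ * (⟪A x, x⟫_ℂ).re := by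
  have h1 := acs A hA (T x) x
  have h2 := abound_s3 A S T hA hA' rel1 x
  set N := (⟪A x, x⟫_ℂ).re with hN
  have hN0 : 0 ≤ N := hA.re_inner_nonneg_left x
  have h3 : ‖⟪A (T x), x⟫_ℂ‖ ^ 2 ≤ (Real.sqrt ‖S ∘L T‖ * N) ^ 2 := by
    have hK0 : (0:ℝ) ≤ ‖S ∘L T‖ := norm_nonneg _
    calc ‖⟪A (T x), x⟫_ℂ‖ ^ 2 ≤ (⟪A (T x), T x⟫_ℂ).re * N := h1
    _ ≤ (‖S ∘L T‖ * N) * N := by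
        apply mul_le_mul_of_nonneg_right h2 hN0
    _ = (Real.sqrt ‖S ∘L T‖ * N) ^ 2 := by
        rw [mul_pow, Real.sq_sqrt hK0]
        ring
  have h4 : (0:ℝ) ≤ Real.sqrt ‖S ∘L T‖ * N := by positivity
  nlinarith [norm_nonneg ⟪A (T x), x⟫_ℂ]

-- scaling lemmas
lemma scal (A T : H →L[ℂ] H) (c : ℝ) (u : H) :
    ⟪A (T ((c:ℂ) • u)), (c:ℂ) • u⟫_ℂ = ((c^2 : ℝ) : ℂ) * ⟪A (T u), u⟫_ℂ := by
  simp only [map_smul, inner_smul_left, inner_smul_right, Complex.conj_ofReal]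
  push_cast
  ring

lemma scal2 (A : H →L[ℂ] H) (c : ℝ) (u : H) :
    (⟪A ((c:ℂ) • u), (c:ℂ) • u⟫_ℂ).re = c^2 * (⟪A u, u⟫_ℂ).re := by
  simp only [map_smul, inner_smul_left, inner_smul_right, Complex.conj_ofReal,
    Complex.re_ofReal_mul]
  ring

-- pointwise vs wA
lemma wA_pt (A T : H →L[ℂ] H) (hA : A.IsPositive)
    (hA' : ∀ x : H, x ≠ 0 → 0 < (⟪A x, x⟫_ℂ).re)
    (hbdd : BddAbove {r : ℝ | ∃ x : H, aNorm A x = 1 ∧ r = ‖⟪A (T x), x⟫_ℂ‖}) (u : H) :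
    ‖⟪A (T u), u⟫_ℂ‖ ≤ wA A T * (⟪A u, u⟫_ℂ).re := by
  rcases eq_or_ne u 0 with rfl | hu
  · simp
  · set N := (⟪A u, u⟫_ℂ).re with hN
    have hNpos : 0 < N := hA' u hu
    set c : ℝ := (Real.sqrt N)⁻¹ with hc
    have hcpos : 0 < c := by positivity
    have hc2 : c ^ 2 = N⁻¹ := by
      rw [hc, ← Real.sqrt_inv]
      exact Real.sq_sqrt (by positivity)
    have hmem : ‖⟪A (T ((c:ℂ) • u)), (c:ℂ) • u⟫_ℂ‖ ∈
        {r : ℝ | ∃ x : H, aNorm A x = 1 ∧ r = ‖⟪A (T x), x⟫_ℂ‖} := by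
      refine ⟨(c:ℂ) • u, ?_, rfl⟩
      rw [aNorm, scal2, hc2, inv_mul_cancel₀ (ne_of_gt hNpos), Real.sqrt_one]
    have hle := le_csSup hbdd hmem
    rw [scal, norm_mul, Complex.norm_real, Real.norm_of_nonneg (by positivity), hc2] at hle
    rw [wA] at *
    calc ‖⟪A (T u), u⟫_ℂ‖ = N * (N⁻¹ * ‖⟪A (T u), u⟫_ℂ‖) := by
          field_simp
    _ ≤ N * sSup {r : ℝ | ∃ x : H, aNorm A x = 1 ∧ r = ‖⟪A (T x), x⟫_ℂ‖} := by
          apply mul_le_mul_of_nonneg_left hle (le_of_lt hNpos)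
    _ = _ * N := mul_comm _ _

-- existence of a unit vector
lemma exists_unit (A : H →L[ℂ] H)
    (hA' : ∀ x : H, x ≠ 0 → 0 < (⟪A x, x⟫_ℂ).re) [Nontrivial H] :
    ∃ x : H, aNorm A x = 1 := by
  obtain ⟨x₀, hx₀⟩ := exists_ne (0 : H)
  have hNpos : 0 < (⟪A x₀, x₀⟫_ℂ).re := hA' x₀ hx₀
  set c : ℝ := (Real.sqrt (⟪A x₀, x₀⟫_ℂ).re)⁻¹ with hc
  refine ⟨(c:ℂ) • x₀, ?_⟩
  rw [aNorm, scal2]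
  rw [hc, ← Real.sqrt_inv, Real.sq_sqrt (by positivity),
    inv_mul_cancel₀ (ne_of_gt hNpos), Real.sqrt_one]

-- algebraic identities


lemma id1 (A T1 T2 : H →L[ℂ] H) (x y : H) :
    ⟪A ((T2 + Complex.I • T1) (x + Complex.I • y)), x + Complex.I • y⟫_ℂ +
      ⟪A ((T2 - Complex.I • T1) (x - Complex.I • y)), x - Complex.I • y⟫_ℂ =
    2 * (⟪A (T2 x - T1 y), x⟫_ℂ + ⟪A (T1 x + T2 y), y⟫_ℂ) := by
  simp only [ContinuousLinearMap.add_apply, ContinuousLinearMap.sub_apply,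
    ContinuousLinearMap.smul_apply, map_add, map_sub, map_smul,
    inner_add_left, inner_add_right, inner_sub_left, inner_sub_right,
    inner_smul_left, inner_smul_right, Complex.conj_I]
  ring_nf
  simp [Complex.I_sq]
  ring

lemma id2 (A : H →L[ℂ] H) (x y : H) :
    ⟪A (x - Complex.I • y), x - Complex.I • y⟫_ℂ +
      ⟪A (x + Complex.I • y), x + Complex.I • y⟫_ℂ =
    2 * (⟪A x, x⟫_ℂ + ⟪A y, y⟫_ℂ) := by
  simp only [map_add, map_sub, map_smul, inner_add_left, inner_add_right,
    inner_sub_left, inner_sub_right, inner_smul_left, inner_smul_right, Complex.conj_I]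
  ring_nf
  simp [Complex.I_sq]
-- extra helpers
lemma wA_smul (A T : H →L[ℂ] H) (z : ℂ) (hz : ‖z‖ = 1) : wA A (z • T) = wA A T := by
  unfold wA
  congr 1
  ext r
  have hval : ∀ x : H, ‖⟪A ((z • T) x), x⟫_ℂ‖ = ‖⟪A (T x), x⟫_ℂ‖ := by
    intro x
    rw [ContinuousLinearMap.smul_apply, map_smul, inner_smul_left, norm_mul,
      RCLike.norm_conj, hz, one_mul]
  constructor
  · rintro ⟨x, hx, rfl⟩; exact ⟨x, hx, hval x⟩
  · rintro ⟨x, hx, rfl⟩; exact ⟨x, hx, (hval x).symm⟩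

lemma aNorm_one (A : H →L[ℂ] H) {x : H} (hx : aNorm A x = 1) : (⟪A x, x⟫_ℂ).re = 1 :=
  Real.sqrt_eq_one.mp hx

theorem stmt3 (A T1 T2 : H →L[ℂ] H) (hA : A.IsPositive) (hA' : ∀ x : H, x ≠ 0 → 0 < (⟪A x, x⟫_ℂ).re)
    (h1 : ∃ S : H →L[ℂ] H, A ∘L S = (ContinuousLinearMap.adjoint T1) ∘L A)
    (h2 : ∃ S : H →L[ℂ] H, A ∘L S = (ContinuousLinearMap.adjoint T2) ∘L A) :
    wB A T2 (-T1) T1 T2 =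
      max (wA A (T1 + Complex.I • T2)) (wA A (T1 - Complex.I • T2)) := by

  obtain ⟨S1, hS1⟩ := h1
  obtain ⟨S2, hS2⟩ := h2
  have rel1 := rel_of_comp A S1 T1 hA hS1
  have rel2 := rel_of_comp A S2 T2 hA hS2
  set P : H →L[ℂ] H := T2 + Complex.I • T1 with hP
  set Q : H →L[ℂ] H := T2 - Complex.I • T1 with hQ
  set SP : H →L[ℂ] H := S2 - Complex.I • S1 with hSP
  set SQ : H →L[ℂ] H := S2 + Complex.I • S1 with hSQ
  have relP : ∀ u v : H, ⟪A (P u), v⟫_ℂ = ⟪A u, SP v⟫_ℂ := by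
    intro u v
    simp only [hP, hSP, ContinuousLinearMap.add_apply, ContinuousLinearMap.sub_apply,
      ContinuousLinearMap.smul_apply, map_add, map_sub, map_smul, inner_add_left,
      inner_sub_left, inner_add_right, inner_sub_right, inner_smul_left, inner_smul_right,
      Complex.conj_I, rel1, rel2]
    ring
  have relQ : ∀ u v : H, ⟪A (Q u), v⟫_ℂ = ⟪A u, SQ v⟫_ℂ := by
    intro u v
    simp only [hQ, hSQ, ContinuousLinearMap.add_apply, ContinuousLinearMap.sub_apply,
      ContinuousLinearMap.smul_apply, map_add, map_sub, map_smul, inner_add_left,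
      inner_sub_left, inner_add_right, inner_sub_right, inner_smul_left, inner_smul_right,
      Complex.conj_I, rel1, rel2]
    ring
  have bndP := pointBound A SP P hA hA' relP
  have bndQ := pointBound A SQ Q hA hA' relQ
  -- identify the wA values
  have hPeq : wA A P = wA A (T1 - Complex.I • T2) := by
    have hop : P = Complex.I • (T1 - Complex.I • T2) := by
      rw [hP, smul_sub, smul_smul, Complex.I_mul_I, neg_one_smul]
      abel
    rw [hop, wA_smul A _ Complex.I (by simp)]
  have hQeq : wA A Q = wA A (T1 + Complex.I • T2) := by
    have hop : Q = (-Complex.I) • (T1 + Complex.I • T2) := by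
      rw [hQ, smul_add, smul_smul, neg_mul, Complex.I_mul_I, neg_neg, one_smul, neg_smul]
      abel
    rw [hop, wA_smul A _ (-Complex.I) (by simp)]
  -- bddAbove for the wA sets
  have hbP : BddAbove {r : ℝ | ∃ x : H, aNorm A x = 1 ∧ r = ‖⟪A (P x), x⟫_ℂ‖} := by
    refine ⟨Real.sqrt ‖SP ∘L P‖, ?_⟩
    rintro r ⟨x, hx, rfl⟩
    simpa [aNorm_one A hx] using bndP x
  have hbQ : BddAbove {r : ℝ | ∃ x : H, aNorm A x = 1 ∧ r = ‖⟪A (Q x), x⟫_ℂ‖} := by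
    refine ⟨Real.sqrt ‖SQ ∘L Q‖, ?_⟩
    rintro r ⟨x, hx, rfl⟩
    simpa [aNorm_one A hx] using bndQ x
  have ptP := wA_pt A P hA hA' hbP
  have ptQ := wA_pt A Q hA hA' hbQ
  -- scaling constant
  set c : ℝ := (Real.sqrt 2)⁻¹ with hc
  have hc2 : c ^ 2 = 1 / 2 := by
    rw [hc, ← Real.sqrt_inv, Real.sq_sqrt (by norm_num)]
    norm_num
  have hccR : ((c ^ 2 : ℝ) : ℂ) * 2 = 1 := by
    rw [hc2]; norm_num
  have hcc : (c : ℂ) * c * 2 = 1 := by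
    push_cast at hccR
    linear_combination hccR
  -- constraint transfer
  have cdef : ∀ x y : H,
      (⟪A ((c:ℂ) • (x + Complex.I • y)), (c:ℂ) • (x + Complex.I • y)⟫_ℂ).re +
      (⟪A ((c:ℂ) • (x - Complex.I • y)), (c:ℂ) • (x - Complex.I • y)⟫_ℂ).re =
      (⟪A x, x⟫_ℂ).re + (⟪A y, y⟫_ℂ).re := by
    intro x y
    rw [scal2, scal2]
    have h2 := id2 A x y
    rw [two_mul] at h2
    have h3 := congrArg Complex.re h2
    simp only [Complex.add_re] at h3
    rw [hc2]
    linarith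
  -- value transfer
  have cval : ∀ x y : H,
      ⟪A (P ((c:ℂ) • (x + Complex.I • y))), (c:ℂ) • (x + Complex.I • y)⟫_ℂ +
      ⟪A (Q ((c:ℂ) • (x - Complex.I • y))), (c:ℂ) • (x - Complex.I • y)⟫_ℂ =
      ⟪A (T2 x - T1 y), x⟫_ℂ + ⟪A (T1 x + T2 y), y⟫_ℂ := by
    intro x y
    rw [scal A P c, scal A Q c, ← mul_add, hP, hQ, id1 A T1 T2 x y, ← mul_assoc, hccR, one_mul]
  -- reconstruction
  have recon : ∀ u v : H, ∃ x y : H,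
      (c:ℂ) • (x + Complex.I • y) = u ∧ (c:ℂ) • (x - Complex.I • y) = v := by
    intro u v
    refine ⟨(c:ℂ) • (u + v), (c:ℂ) • ((-Complex.I) • (u - v)), ?_, ?_⟩ <;>
      match_scalars <;>
      first
        | linear_combination hcc - (c:ℂ)^2 * Complex.I_sq
        | linear_combination (c:ℂ)^2 * Complex.I_sq
        | linear_combination hcc + (c:ℂ)^2 * Complex.I_sq
        | linear_combination (-(c:ℂ)^2) * Complex.I_sq
  -- rewrite the wB set
  rw [wB]
  simp only [ContinuousLinearMap.neg_apply, ← sub_eq_add_neg]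
  have setEq : {r : ℝ | ∃ x y : H, Real.sqrt ((⟪A x, x⟫_ℂ).re + (⟪A y, y⟫_ℂ).re) = 1 ∧
      r = ‖⟪A (T2 x - T1 y), x⟫_ℂ + ⟪A (T1 x + T2 y), y⟫_ℂ‖} =
      {r : ℝ | ∃ u v : H, Real.sqrt ((⟪A u, u⟫_ℂ).re + (⟪A v, v⟫_ℂ).re) = 1 ∧
      r = ‖⟪A (P u), u⟫_ℂ + ⟪A (Q v), v⟫_ℂ‖} := by
    ext r
    simp only [Set.mem_setOf_eq]
    constructor
    · rintro ⟨x, y, hcon, rfl⟩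
      refine ⟨(c:ℂ) • (x + Complex.I • y), (c:ℂ) • (x - Complex.I • y), ?_, ?_⟩
      · rw [cdef]; exact hcon
      · rw [cval]
    · rintro ⟨u, v, hcon, rfl⟩
      obtain ⟨x, y, hxu, hxv⟩ := recon u v
      rw [← hxu, ← hxv] at hcon
      rw [cdef] at hcon
      exact ⟨x, y, hcon, by rw [← hxu, ← hxv, cval]⟩
  rw [setEq, ← hPeq, ← hQeq, max_comm]
  -- now: sSup SD = max (wA A P) (wA A Q)
  rcases subsingleton_or_nontrivial H with hsub | hnt
  · have e0 : ∀ x : H, x = 0 := fun x => Subsingleton.elim x 0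
    have eD : {r : ℝ | ∃ u v : H, Real.sqrt ((⟪A u, u⟫_ℂ).re + (⟪A v, v⟫_ℂ).re) = 1 ∧
        r = ‖⟪A (P u), u⟫_ℂ + ⟪A (Q v), v⟫_ℂ‖} = (∅ : Set ℝ) := by
      ext r
      simp only [Set.mem_setOf_eq, Set.mem_empty_iff_false, iff_false, not_exists]
      rintro u v ⟨hcon, -⟩
      rw [e0 u, e0 v] at hcon
      simp at hcon
    have eP : wA A P = 0 := by
      rw [wA]
      convert Real.sSup_empty using 2
      ext r
      simp only [Set.mem_setOf_eq, Set.mem_empty_iff_false, iff_false, not_exists]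
      rintro x ⟨hx, -⟩
      rw [e0 x] at hx
      simp [aNorm] at hx
    have eQ : wA A Q = 0 := by
      rw [wA]
      convert Real.sSup_empty using 2
      ext r
      simp only [Set.mem_setOf_eq, Set.mem_empty_iff_false, iff_false, not_exists]
      rintro x ⟨hx, -⟩
      rw [e0 x] at hx
      simp [aNorm] at hx
    rw [eD, eP, eQ, Real.sSup_empty]
    simp
  · obtain ⟨x₀, hx₀⟩ := exists_unit A hA'
    have hx₀' : (⟪A x₀, x₀⟫_ℂ).re = 1 := aNorm_one A hx₀
    have hWPne : {r : ℝ | ∃ x : H, aNorm A x = 1 ∧ r = ‖⟪A (P x), x⟫_ℂ‖}.Nonempty :=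
      ⟨_, x₀, hx₀, rfl⟩
    have hWQne : {r : ℝ | ∃ x : H, aNorm A x = 1 ∧ r = ‖⟪A (Q x), x⟫_ℂ‖}.Nonempty :=
      ⟨_, x₀, hx₀, rfl⟩
    have hSDne : {r : ℝ | ∃ u v : H, Real.sqrt ((⟪A u, u⟫_ℂ).re + (⟪A v, v⟫_ℂ).re) = 1 ∧
        r = ‖⟪A (P u), u⟫_ℂ + ⟪A (Q v), v⟫_ℂ‖}.Nonempty :=
      ⟨_, x₀, 0, by simp [hx₀'], rfl⟩
    have hbD : BddAbove {r : ℝ | ∃ u v : H, Real.sqrt ((⟪A u, u⟫_ℂ).re + (⟪A v, v⟫_ℂ).re) = 1 ∧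
        r = ‖⟪A (P u), u⟫_ℂ + ⟪A (Q v), v⟫_ℂ‖} := by
      refine ⟨max (Real.sqrt ‖SP ∘L P‖) (Real.sqrt ‖SQ ∘L Q‖), ?_⟩
      rintro r ⟨u, v, hcon, rfl⟩
      have ha : 0 ≤ (⟪A u, u⟫_ℂ).re := hA.re_inner_nonneg_left u
      have hb : 0 ≤ (⟪A v, v⟫_ℂ).re := hA.re_inner_nonneg_left v
      have hsum : (⟪A u, u⟫_ℂ).re + (⟪A v, v⟫_ℂ).re = 1 := Real.sqrt_eq_one.mp hcon
      have h1 : ‖⟪A (P u), u⟫_ℂ + ⟪A (Q v), v⟫_ℂ‖ ≤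
          Real.sqrt ‖SP ∘L P‖ * (⟪A u, u⟫_ℂ).re + Real.sqrt ‖SQ ∘L Q‖ * (⟪A v, v⟫_ℂ).re :=
        le_trans (norm_add_le _ _) (add_le_add (bndP u) (bndQ v))
      have h2 : Real.sqrt ‖SP ∘L P‖ * (⟪A u, u⟫_ℂ).re + Real.sqrt ‖SQ ∘L Q‖ * (⟪A v, v⟫_ℂ).re ≤
          max (Real.sqrt ‖SP ∘L P‖) (Real.sqrt ‖SQ ∘L Q‖) := by
        calc Real.sqrt ‖SP ∘L P‖ * (⟪A u, u⟫_ℂ).re + Real.sqrt ‖SQ ∘L Q‖ * (⟪A v, v⟫_ℂ).re ≤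
            max (Real.sqrt ‖SP ∘L P‖) (Real.sqrt ‖SQ ∘L Q‖) * (⟪A u, u⟫_ℂ).re +
            max (Real.sqrt ‖SP ∘L P‖) (Real.sqrt ‖SQ ∘L Q‖) * (⟪A v, v⟫_ℂ).re := by
              gcongr
              · exact le_max_left _ _
              · exact le_max_right _ _
        _ = max (Real.sqrt ‖SP ∘L P‖) (Real.sqrt ‖SQ ∘L Q‖) := by
              rw [← mul_add, hsum, mul_one]
      exact le_trans h1 h2
    have h0P : 0 ≤ wA A P :=
      le_trans (norm_nonneg ⟪A (P x₀), x₀⟫_ℂ) (le_csSup hbP ⟨x₀, hx₀, rfl⟩)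
    have h0Q : 0 ≤ wA A Q :=
      le_trans (norm_nonneg ⟪A (Q x₀), x₀⟫_ℂ) (le_csSup hbQ ⟨x₀, hx₀, rfl⟩)
    apply le_antisymm
    · apply csSup_le hSDne
      rintro r ⟨u, v, hcon, rfl⟩
      have ha : 0 ≤ (⟪A u, u⟫_ℂ).re := hA.re_inner_nonneg_left u
      have hb : 0 ≤ (⟪A v, v⟫_ℂ).re := hA.re_inner_nonneg_left v
      have hsum : (⟪A u, u⟫_ℂ).re + (⟪A v, v⟫_ℂ).re = 1 := Real.sqrt_eq_one.mp hcon
      have h1 : ‖⟪A (P u), u⟫_ℂ + ⟪A (Q v), v⟫_ℂ‖ ≤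
          wA A P * (⟪A u, u⟫_ℂ).re + wA A Q * (⟪A v, v⟫_ℂ).re :=
        le_trans (norm_add_le _ _) (add_le_add (ptP u) (ptQ v))
      calc ‖⟪A (P u), u⟫_ℂ + ⟪A (Q v), v⟫_ℂ‖ ≤
          wA A P * (⟪A u, u⟫_ℂ).re + wA A Q * (⟪A v, v⟫_ℂ).re := h1
      _ ≤ max (wA A P) (wA A Q) * (⟪A u, u⟫_ℂ).re +
          max (wA A P) (wA A Q) * (⟪A v, v⟫_ℂ).re := by
            gcongr
            · exact le_max_left _ _
            · exact le_max_right _ _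
      _ = max (wA A P) (wA A Q) := by rw [← mul_add, hsum, mul_one]
    · apply max_le
      · apply csSup_le_csSup hbD hWPne
        rintro r ⟨x, hx, rfl⟩
        exact ⟨x, 0, by simp [aNorm_one A hx], by simp⟩
      · apply csSup_le_csSup hbD hWQne
        rintro r ⟨x, hx, rfl⟩
        exact ⟨0, x, by simp [aNorm_one A hx], by simp⟩
end

section
/- Let A be strictly positive and let T1, T2 be bounded linear operators on H each admitting an A-adjoint (i.e. for each i there exists S_i with A∘S_i = T_i*∘A). Then w_B([[iT2,-T1],[T1,iT2]]) = max{w_A(T1 - T2), w_A(T1 + T2)}. -/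
open scoped InnerProductSpace
open ContinuousLinearMap

variable {H : Type*} [NormedAddCommGroup H] [InnerProductSpace ℂ H] [CompleteSpace H]

lemma aux_move (B : H →L[ℂ] H) (hB : IsSelfAdjoint B) (x y : H) :
    ⟪B x, y⟫_ℂ = ⟪x, B y⟫_ℂ := by
  nth_rewrite 1 [← hB.adjoint_eq]
  exact ContinuousLinearMap.adjoint_inner_left B y x

lemma aux_key (A B R : H →L[ℂ] H) (hB : IsSelfAdjoint B) (hBB : B ∘L B = A)
    (hA' : ∀ x : H, x ≠ 0 → 0 < (⟪A x, x⟫_ℂ).re)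
    (hR : adjoint R ∘L A = A ∘L R) (x : H) :
    ‖B (R x)‖ ≤ ‖R‖ * ‖B x‖ := by
  have hApp : ∀ u : H, A u = B (B u) := fun u => by rw [← hBB]; rfl
  have hnz : ∀ u : H, B u = 0 → u = 0 := by
    intro u h
    by_contra hu
    have h1 := hA' u hu
    rw [hApp, aux_move B hB, h] at h1
    simp at h1
  have hpow : ∀ k : ℕ, adjoint (R ^ k) ∘L A = A ∘L (R ^ k) := by
    intro k
    induction k with
    | zero => simp [one_def, ContinuousLinearMap.adjoint_id]
    | succ k ih =>
      have e1 : R ^ (k+1) = (R ^ k) ∘L R := pow_succ R k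
      have e2 : R ^ (k+1) = R ∘L (R ^ k) := pow_succ' R k
      rw [e1, adjoint_comp]
      calc (adjoint R ∘L adjoint (R ^ k)) ∘L A
          = adjoint R ∘L (adjoint (R ^ k) ∘L A) := by rw [comp_assoc]
        _ = adjoint R ∘L (A ∘L (R ^ k)) := by rw [ih]
        _ = (adjoint R ∘L A) ∘L (R ^ k) := by rw [comp_assoc]
        _ = (A ∘L R) ∘L (R ^ k) := by rw [hR]
        _ = A ∘L (R ∘L (R ^ k)) := by rw [comp_assoc]
        _ = A ∘L R ^ (k+1) := by rw [← e2]
  have hstep : ∀ (k : ℕ) (y : H), ‖B ((R ^ k) y)‖ ^ 2 ≤ ‖B ((R ^ (2*k)) y)‖ * ‖B y‖ := by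
    intro k y
    have e1 : (‖B ((R ^ k) y)‖ : ℝ) ^ 2 = (⟪B ((R ^ k) y), B ((R ^ k) y)⟫_ℂ).re :=
      (inner_self_eq_norm_sq (𝕜 := ℂ) _).symm
    have e2 : ⟪B ((R ^ k) y), B ((R ^ k) y)⟫_ℂ = ⟪B ((R ^ (2*k)) y), B y⟫_ℂ := by
      rw [aux_move B hB, ← hApp]
      have e3 : A ((R ^ k) y) = adjoint (R ^ k) (A y) := by
        have := congrFun (congrArg DFunLike.coe (hpow k)) y
        simpa using this.symm
      rw [e3, adjoint_inner_right]
      have e4 : (R ^ k) ((R ^ k) y) = (R ^ (2*k)) y := by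
        rw [two_mul, pow_add]; rfl
      rw [e4, hApp, ← aux_move B hB]
    calc ‖B ((R ^ k) y)‖ ^ 2 = (⟪B ((R ^ (2*k)) y), B y⟫_ℂ).re := by rw [e1, e2]
      _ ≤ ‖(⟪B ((R ^ (2*k)) y), B y⟫_ℂ)‖ := Complex.re_le_norm _
      _ ≤ ‖B ((R ^ (2*k)) y)‖ * ‖B y‖ := norm_inner_le_norm _ _
  -- normalize
  rcases eq_or_ne x 0 with rfl | hx0
  · simp
  have hd : 0 < ‖B x‖ := by
    rcases (norm_nonneg (B x)).lt_or_eq with h | h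
    · exact h
    · exact absurd (hnz x (norm_eq_zero.mp h.symm)) hx0
  set d : ℝ := ‖B x‖ with hdd
  suffices hmain : ∀ y : H, ‖B y‖ = 1 → ‖B (R y)‖ ≤ ‖R‖ by
    have hy1 : ‖B (((d⁻¹ : ℝ) : ℂ) • x)‖ = 1 := by
      rw [map_smul, norm_smul, Complex.norm_real, Real.norm_eq_abs, abs_inv,
        abs_of_pos hd, ← hdd, inv_mul_cancel₀ hd.ne']
    have := hmain _ hy1
    rw [map_smul, map_smul, norm_smul] at this
    simp only [Complex.norm_real, Real.norm_eq_abs, abs_of_pos (inv_pos.mpr hd)] at this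
    calc ‖B (R x)‖ = d * (d⁻¹ * ‖B (R x)‖) := by field_simp
      _ ≤ d * ‖R‖ := by nlinarith [inv_pos.mpr hd]
      _ = ‖R‖ * ‖B x‖ := by rw [mul_comm]
  intro y hy1
  have hiter : ∀ n : ℕ, ‖B (R y)‖ ^ (2 ^ n) ≤ ‖B ((R ^ (2 ^ n)) y)‖ := by
    intro n
    induction n with
    | zero => simp
    | succ n ih =>
      have e5 : (2:ℕ) ^ (n+1) = 2 ^ n * 2 := by ring
      calc ‖B (R y)‖ ^ (2 ^ (n+1)) = (‖B (R y)‖ ^ (2 ^ n)) ^ 2 := by rw [e5, pow_mul]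
        _ ≤ ‖B ((R ^ (2 ^ n)) y)‖ ^ 2 := by
            apply pow_le_pow_left₀ (by positivity) ih
        _ ≤ ‖B ((R ^ (2 * 2 ^ n)) y)‖ * ‖B y‖ := hstep (2 ^ n) y
        _ = ‖B ((R ^ (2 ^ (n+1))) y)‖ := by rw [hy1, mul_one, pow_succ']
  set K : ℝ := ‖B‖ * ‖y‖ with hK
  have hbd : ∀ n : ℕ, ‖B (R y)‖ ^ (2 ^ n) ≤ K * ‖R‖ ^ (2 ^ n) := by
    intro n
    refine (hiter n).trans ?_
    calc ‖B ((R ^ (2 ^ n)) y)‖ ≤ ‖B‖ * ‖(R ^ (2 ^ n)) y‖ := le_opNorm _ _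
      _ ≤ ‖B‖ * (‖R ^ (2 ^ n)‖ * ‖y‖) := by
          gcongr; exact le_opNorm _ _
      _ ≤ ‖B‖ * (‖R‖ ^ (2 ^ n) * ‖y‖) := by
          gcongr
          exact norm_pow_le' R (Nat.pow_pos (by norm_num))
      _ = K * ‖R‖ ^ (2 ^ n) := by rw [hK]; ring
  by_contra hcon
  push_neg at hcon
  have ha0 : 0 < ‖B (R y)‖ := (norm_nonneg R).trans_lt hcon
  rcases (norm_nonneg R).lt_or_eq with hr | hr
  · set q : ℝ := ‖B (R y)‖ / ‖R‖ with hq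
    have hq1 : 1 < q := (one_lt_div hr).mpr hcon
    have hqn : ∀ n : ℕ, q ^ (2 ^ n) ≤ K := by
      intro n
      rw [hq, div_pow, div_le_iff₀ (by positivity)]
      exact hbd n
    obtain ⟨n, hn⟩ := pow_unbounded_of_one_lt K hq1
    have : q ^ n ≤ q ^ (2 ^ n) := pow_le_pow_right₀ hq1.le (Nat.lt_two_pow_self (n := n)).le
    linarith [hqn n]
  · have := hbd 0
    rw [← hr] at this
    norm_num at this
    have h2 : B (R y) = 0 := this
    rw [h2, norm_zero] at ha0
    exact lt_irrefl _ ha0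

lemma aux_bd (A B S T : H →L[ℂ] H) (hB : IsSelfAdjoint B) (hBB : B ∘L B = A)
    (hA : IsSelfAdjoint A) (hA' : ∀ x : H, x ≠ 0 → 0 < (⟪A x, x⟫_ℂ).re)
    (h : A ∘L S = adjoint T ∘L A) (x : H) :
    ‖B (T x)‖ ^ 2 ≤ ‖S ∘L T‖ * ‖B x‖ ^ 2 := by
  have hApp : ∀ u : H, A u = B (B u) := fun u => by rw [← hBB]; rfl
  have hSA : adjoint S ∘L A = A ∘L T := by
    have h2 := congrArg adjoint h
    rw [adjoint_comp, adjoint_comp, adjoint_adjoint, hA.adjoint_eq] at h2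
    exact h2
  have hR : adjoint (S ∘L T) ∘L A = A ∘L (S ∘L T) := by
    rw [adjoint_comp]
    calc (adjoint T ∘L adjoint S) ∘L A
        = adjoint T ∘L (adjoint S ∘L A) := by rw [comp_assoc]
      _ = adjoint T ∘L (A ∘L T) := by rw [hSA]
      _ = (adjoint T ∘L A) ∘L T := by rw [comp_assoc]
      _ = (A ∘L S) ∘L T := by rw [h]
      _ = A ∘L (S ∘L T) := by rw [comp_assoc]
  have key := aux_key A B (S ∘L T) hB hBB hA' hR x
  have e1 : (‖B (T x)‖ : ℝ) ^ 2 = (⟪B (T x), B (T x)⟫_ℂ).re :=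
    (inner_self_eq_norm_sq (𝕜 := ℂ) _).symm
  have e2 : ⟪B (T x), B (T x)⟫_ℂ = ⟪B x, B ((S ∘L T) x)⟫_ℂ := by
    rw [aux_move B hB, ← hApp]
    rw [← adjoint_inner_right T]
    have e3 : adjoint T (A (T x)) = A ((S ∘L T) x) := by
      have h4 := congrFun (congrArg DFunLike.coe h) (T x)
      simpa using h4.symm
    rw [e3, hApp, ← aux_move B hB]
  calc ‖B (T x)‖ ^ 2 = (⟪B x, B ((S ∘L T) x)⟫_ℂ).re := by rw [e1, e2]
    _ ≤ ‖(⟪B x, B ((S ∘L T) x)⟫_ℂ)‖ := Complex.re_le_norm _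
    _ ≤ ‖B x‖ * ‖B ((S ∘L T) x)‖ := norm_inner_le_norm _ _
    _ ≤ ‖B x‖ * (‖S ∘L T‖ * ‖B x‖) := mul_le_mul_of_nonneg_left key (norm_nonneg _)
    _ = ‖S ∘L T‖ * ‖B x‖ ^ 2 := by ring

lemma aux_id2 (A : H →L[ℂ] H) (c : ℝ) (hc : 2 * (c:ℂ)^2 = 1) (u v : H) :
    ⟪A ((c:ℂ) • (u + v)), (c:ℂ) • (u + v)⟫_ℂ
      + ⟪A ((-Complex.I * c) • (u - v)), (-Complex.I * c) • (u - v)⟫_ℂ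
    = ⟪A u, u⟫_ℂ + ⟪A v, v⟫_ℂ := by
  simp only [map_smul, map_add, map_sub, inner_smul_left, inner_smul_right,
    inner_add_left, inner_add_right, inner_sub_left, inner_sub_right,
    map_mul, map_neg, Complex.conj_I, Complex.conj_ofReal]
  linear_combination (⟪A u, u⟫_ℂ + ⟪A v, v⟫_ℂ) * hc +
    (-(c:ℂ)^2 * (⟪A u, u⟫_ℂ + ⟪A v, v⟫_ℂ - ⟪A u, v⟫_ℂ - ⟪A v, u⟫_ℂ)) * Complex.I_sq

lemma aux_id (A T1 T2 : H →L[ℂ] H) (c : ℝ) (hc : 2 * (c:ℂ)^2 = 1) (u v : H) :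
    ⟪A ((Complex.I • T2) ((c:ℂ) • (u + v)) + (-T1) ((-Complex.I * c) • (u - v))),
        (c:ℂ) • (u + v)⟫_ℂ
      + ⟪A (T1 ((c:ℂ) • (u + v)) + (Complex.I • T2) ((-Complex.I * c) • (u - v))),
        (-Complex.I * c) • (u - v)⟫_ℂ
    = -Complex.I * (⟪A ((T1 + T2) u), u⟫_ℂ - ⟪A ((T1 - T2) v), v⟫_ℂ) := by
  simp only [ContinuousLinearMap.smul_apply, ContinuousLinearMap.neg_apply,
    ContinuousLinearMap.add_apply, ContinuousLinearMap.sub_apply,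
    map_smul, map_add, map_sub, map_neg, smul_smul,
    inner_smul_left, inner_smul_right, inner_add_left, inner_add_right,
    inner_sub_left, inner_sub_right, inner_neg_left, inner_neg_right,
    map_mul, Complex.conj_I, Complex.conj_ofReal]
  linear_combination (-Complex.I * (⟪A (T1 u), u⟫_ℂ + ⟪A (T2 u), u⟫_ℂ
      - ⟪A (T1 v), v⟫_ℂ + ⟪A (T2 v), v⟫_ℂ)) * hc +
    (Complex.I * (c:ℂ)^2 * (⟪A (T2 u), u⟫_ℂ - ⟪A (T2 u), v⟫_ℂ - ⟪A (T2 v), u⟫_ℂ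
      + ⟪A (T2 v), v⟫_ℂ)) * Complex.I_sq

lemma aux_wA (A B T : H →L[ℂ] H) (hB : IsSelfAdjoint B) (hBB : B ∘L B = A)
    (hA' : ∀ x : H, x ≠ 0 → 0 < (⟪A x, x⟫_ℂ).re) (c : ℝ)
    (hc : ∀ x : H, ‖B (T x)‖ ^ 2 ≤ c * ‖B x‖ ^ 2) (e : H) (he : ‖B e‖ = 1) :
    BddAbove {r : ℝ | ∃ x : H, aNorm A x = 1 ∧ r = ‖⟪A (T x), x⟫_ℂ‖} ∧
    0 ≤ sSup {r : ℝ | ∃ x : H, aNorm A x = 1 ∧ r = ‖⟪A (T x), x⟫_ℂ‖} ∧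
    ∀ x : H, ‖⟪A (T x), x⟫_ℂ‖ ≤
      sSup {r : ℝ | ∃ x : H, aNorm A x = 1 ∧ r = ‖⟪A (T x), x⟫_ℂ‖} * ‖B x‖ ^ 2 := by
  have hApp : ∀ u : H, A u = B (B u) := fun u => by rw [← hBB]; rfl
  have hre : ∀ x : H, (⟪A x, x⟫_ℂ).re = ‖B x‖ ^ 2 := fun x => by
    rw [hApp, aux_move B hB]; exact inner_self_eq_norm_sq (𝕜 := ℂ) (B x)
  have haN : ∀ x : H, aNorm A x = ‖B x‖ := fun x => by
    rw [aNorm, hre, Real.sqrt_sq (norm_nonneg _)]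
  have hzero : ∀ x : H, ‖B x‖ = 0 → x = 0 := by
    intro x h
    by_contra hx
    have h2 := hA' x hx
    rw [hre x, h] at h2; norm_num at h2
  have hAin : ∀ x y : H, ⟪A x, y⟫_ℂ = ⟪B x, B y⟫_ℂ := fun x y => by
    rw [hApp, aux_move B hB]
  have hc0 : 0 ≤ c := by
    have := hc e
    rw [he] at this
    nlinarith [sq_nonneg ‖B (T e)‖]
  have hub : ∀ r ∈ {r : ℝ | ∃ x : H, aNorm A x = 1 ∧ r = ‖⟪A (T x), x⟫_ℂ‖},
      r ≤ Real.sqrt c := by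
    rintro r ⟨x, hx, rfl⟩
    rw [haN] at hx
    calc ‖⟪A (T x), x⟫_ℂ‖ = ‖⟪B (T x), B x⟫_ℂ‖ := by rw [hAin]
      _ ≤ ‖B (T x)‖ * ‖B x‖ := norm_inner_le_norm _ _
      _ = ‖B (T x)‖ := by rw [hx, mul_one]
      _ ≤ Real.sqrt c := by
          rw [← Real.sqrt_sq (norm_nonneg (B (T x)))]
          apply Real.sqrt_le_sqrt
          calc ‖B (T x)‖ ^ 2 ≤ c * ‖B x‖ ^ 2 := hc x
            _ = c := by rw [hx]; ring
  have hbdd : BddAbove {r : ℝ | ∃ x : H, aNorm A x = 1 ∧ r = ‖⟪A (T x), x⟫_ℂ‖} :=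
    ⟨Real.sqrt c, hub⟩
  have hmem : ∀ x : H, ‖B x‖ = 1 →
      ‖⟪A (T x), x⟫_ℂ‖ ∈ {r : ℝ | ∃ x : H, aNorm A x = 1 ∧ r = ‖⟪A (T x), x⟫_ℂ‖} :=
    fun x hx => ⟨x, (haN x).trans hx, rfl⟩
  have hnn : 0 ≤ sSup {r : ℝ | ∃ x : H, aNorm A x = 1 ∧ r = ‖⟪A (T x), x⟫_ℂ‖} :=
    (norm_nonneg _).trans (le_csSup hbdd (hmem e he))
  refine ⟨hbdd, hnn, fun x => ?_⟩
  rcases eq_or_ne ‖B x‖ 0 with h0 | h0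
  · have hx0 : x = 0 := hzero x h0
    subst hx0
    simp
  have ht : 0 < ‖B x‖ := (norm_nonneg _).lt_of_ne' h0
  set t : ℝ := ‖B x‖ with htd
  set x' : H := ((t⁻¹ : ℝ) : ℂ) • x with hx'd
  have hx'1 : ‖B x'‖ = 1 := by
    rw [hx'd, map_smul, norm_smul, Complex.norm_real, Real.norm_eq_abs, abs_inv,
      abs_of_pos ht, ← htd, inv_mul_cancel₀ ht.ne']
  have hval : ⟪A (T x'), x'⟫_ℂ = ((t⁻¹ : ℝ) : ℂ) ^ 2 * ⟪A (T x), x⟫_ℂ := by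
    rw [hx'd, map_smul, map_smul, inner_smul_left, inner_smul_right, Complex.conj_ofReal]
    ring
  have hle := le_csSup hbdd (hmem x' hx'1)
  rw [hval] at hle
  rw [norm_mul, norm_pow, Complex.norm_real, Real.norm_eq_abs, abs_inv, abs_of_pos ht] at hle
  calc ‖⟪A (T x), x⟫_ℂ‖
      = t ^ 2 * ((t⁻¹) ^ 2 * ‖⟪A (T x), x⟫_ℂ‖) := by field_simp
    _ ≤ t ^ 2 * sSup {r : ℝ | ∃ x : H, aNorm A x = 1 ∧ r = ‖⟪A (T x), x⟫_ℂ‖} := by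
        have h2 : (0:ℝ) ≤ t ^ 2 := sq_nonneg t
        nlinarith [hle]
    _ = sSup {r : ℝ | ∃ x : H, aNorm A x = 1 ∧ r = ‖⟪A (T x), x⟫_ℂ‖} * ‖B x‖ ^ 2 := by
        rw [← htd]; ring

theorem stmt4 (A T1 T2 : H →L[ℂ] H) (hA : A.IsPositive) (hA' : ∀ x : H, x ≠ 0 → 0 < (⟪A x, x⟫_ℂ).re)
    (h1 : ∃ S : H →L[ℂ] H, A ∘L S = (ContinuousLinearMap.adjoint T1) ∘L A)
    (h2 : ∃ S : H →L[ℂ] H, A ∘L S = (ContinuousLinearMap.adjoint T2) ∘L A) :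
    wB A (Complex.I • T2) (-T1) T1 (Complex.I • T2) =
      max (wA A (T1 - T2)) (wA A (T1 + T2)) := by
  classical
  obtain ⟨S1, hS1⟩ := h1
  obtain ⟨S2, hS2⟩ := h2
  obtain ⟨B, hB, hBB⟩ : ∃ B : H →L[ℂ] H, IsSelfAdjoint B ∧ B ∘L B = A := by
    have h0 : (0 : H →L[ℂ] H) ≤ A := (nonneg_iff_isPositive A).mpr hA
    exact ⟨CFC.sqrt A, IsSelfAdjoint.of_nonneg (CFC.sqrt_nonneg A), CFC.sqrt_mul_sqrt_self A h0⟩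
  have hApp : ∀ u : H, A u = B (B u) := fun u => by rw [← hBB]; rfl
  have hre : ∀ x : H, (⟪A x, x⟫_ℂ).re = ‖B x‖ ^ 2 := fun x => by
    rw [hApp, aux_move B hB]; exact inner_self_eq_norm_sq (𝕜 := ℂ) (B x)
  have haN : ∀ x : H, aNorm A x = ‖B x‖ := fun x => by
    rw [aNorm, hre, Real.sqrt_sq (norm_nonneg _)]
  have hzero : ∀ x : H, ‖B x‖ = 0 → x = 0 := by
    intro x h
    by_contra hx
    have h2 := hA' x hx
    rw [hre x, h] at h2; norm_num at h2
  -- trivial case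
  rcases subsingleton_or_nontrivial H with hH | hH
  · have hempty : ∀ x : H, aNorm A x ≠ 1 := by
      intro x
      rw [Subsingleton.elim x 0, haN, map_zero, norm_zero]
      norm_num
    have e1 : {r : ℝ | ∃ x : H, aNorm A x = 1 ∧ r = ‖⟪A ((T1 - T2) x), x⟫_ℂ‖} = ∅ := by
      ext r; simp only [Set.mem_setOf_eq, Set.mem_empty_iff_false, iff_false, not_exists]
      exact fun x h => (hempty x h.1).elim
    have e2 : {r : ℝ | ∃ x : H, aNorm A x = 1 ∧ r = ‖⟪A ((T1 + T2) x), x⟫_ℂ‖} = ∅ := by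
      ext r; simp only [Set.mem_setOf_eq, Set.mem_empty_iff_false, iff_false, not_exists]
      exact fun x h => (hempty x h.1).elim
    have e3 : {r : ℝ | ∃ x y : H, Real.sqrt ((⟪A x, x⟫_ℂ).re + (⟪A y, y⟫_ℂ).re) = 1 ∧
        r = ‖⟪A ((Complex.I • T2) x + (-T1) y), x⟫_ℂ + ⟪A (T1 x + (Complex.I • T2) y), y⟫_ℂ‖}
        = ∅ := by
      ext r; simp only [Set.mem_setOf_eq, Set.mem_empty_iff_false, iff_false, not_exists]
      intro x y h
      have hx : (⟪A x, x⟫_ℂ).re = 0 := by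
        rw [Subsingleton.elim x 0]; simp
      have hy : (⟪A y, y⟫_ℂ).re = 0 := by
        rw [Subsingleton.elim y 0]; simp
      rw [hx, hy] at h
      norm_num at h
    rw [wB, wA, wA, e1, e2, e3, Real.sSup_empty]
    norm_num
  -- nontrivial case
  obtain ⟨z0, hz0⟩ := exists_ne (0 : H)
  have hz0' : 0 < ‖B z0‖ := by
    rcases (norm_nonneg (B z0)).lt_or_eq with h | h
    · exact h
    · exact absurd (hzero z0 h.symm) hz0
  set e : H := ((‖B z0‖⁻¹ : ℝ) : ℂ) • z0 with hed
  have he : ‖B e‖ = 1 := by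
    rw [hed, map_smul, norm_smul, Complex.norm_real, Real.norm_eq_abs, abs_inv,
      abs_of_pos hz0', inv_mul_cancel₀ hz0'.ne']
  have hsaA : IsSelfAdjoint A := hA.isSelfAdjoint
  have hp : A ∘L (S1 + S2) = adjoint (T1 + T2) ∘L A := by
    rw [comp_add, map_add, add_comp, hS1, hS2]
  have hm : A ∘L (S1 - S2) = adjoint (T1 - T2) ∘L A := by
    rw [comp_sub, map_sub, sub_comp, hS1, hS2]
  obtain ⟨bddP, nnP, ptP⟩ := aux_wA A B (T1 + T2) hB hBB hA' ‖(S1 + S2) ∘L (T1 + T2)‖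
    (aux_bd A B (S1 + S2) (T1 + T2) hB hBB hsaA hA' hp) e he
  obtain ⟨bddM, nnM, ptM⟩ := aux_wA A B (T1 - T2) hB hBB hA' ‖(S1 - S2) ∘L (T1 - T2)‖
    (aux_bd A B (S1 - S2) (T1 - T2) hB hBB hsaA hA' hm) e he
  set wP : ℝ := sSup {r : ℝ | ∃ x : H, aNorm A x = 1 ∧ r = ‖⟪A ((T1 + T2) x), x⟫_ℂ‖}
    with hwPd
  set wM : ℝ := sSup {r : ℝ | ∃ x : H, aNorm A x = 1 ∧ r = ‖⟪A ((T1 - T2) x), x⟫_ℂ‖}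
    with hwMd
  have hPg : wA A (T1 + T2) = wP := hwPd.symm
  have hMg : wA A (T1 - T2) = wM := hwMd.symm
  obtain ⟨c, hc⟩ : ∃ c : ℝ, 2 * (c:ℂ)^2 = 1 := by
    refine ⟨(Real.sqrt 2)⁻¹, ?_⟩
    push_cast
    rw [inv_pow]
    norm_cast
    rw [Real.sq_sqrt (by norm_num : (0:ℝ) ≤ 2)]
    norm_num
  set SB := {r : ℝ | ∃ x y : H, Real.sqrt ((⟪A x, x⟫_ℂ).re + (⟪A y, y⟫_ℂ).re) = 1 ∧
      r = ‖⟪A ((Complex.I • T2) x + (-T1) y), x⟫_ℂ + ⟪A (T1 x + (Complex.I • T2) y), y⟫_ℂ‖}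
    with hSBd
  have hwB : wB A (Complex.I • T2) (-T1) T1 (Complex.I • T2) = sSup SB := rfl
  -- upper bound for SB elements
  have hSBub : ∀ r ∈ SB, r ≤ max wM wP := by
    rintro r ⟨x, y, hxy, rfl⟩
    obtain ⟨u, hud⟩ : ∃ u : H, u = (c:ℂ) • (x + Complex.I • y) := ⟨_, rfl⟩
    obtain ⟨v, hvd⟩ : ∃ v : H, v = (c:ℂ) • (x - Complex.I • y) := ⟨_, rfl⟩
    have hx : x = (c:ℂ) • (u + v) := by
      rw [hud, hvd]
      match_scalars
      · linear_combination -hc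
      · ring
    have hy : y = (-Complex.I * c) • (u - v) := by
      rw [hud, hvd]
      match_scalars
      · linear_combination -hc + 2*(c:ℂ)^2 * Complex.I_sq
      · ring
    have hval : ‖⟪A ((Complex.I • T2) x + (-T1) y), x⟫_ℂ + ⟪A (T1 x + (Complex.I • T2) y), y⟫_ℂ‖
        = ‖⟪A ((T1 + T2) u), u⟫_ℂ - ⟪A ((T1 - T2) v), v⟫_ℂ‖ := by
      conv_lhs => rw [hx, hy]
      rw [aux_id A T1 T2 c hc u v, norm_mul, norm_neg, Complex.norm_I, one_mul]
    have hcon : ‖B u‖ ^ 2 + ‖B v‖ ^ 2 = 1 := by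
      have h3 := Real.sqrt_eq_one.mp hxy
      have h4 := aux_id2 A c hc u v
      have h5 := congrArg Complex.re h4
      rw [Complex.add_re, Complex.add_re] at h5
      conv_lhs at h3 => rw [hx, hy]
      rw [h5] at h3
      rw [← hre, ← hre, h3]
    calc ‖⟪A ((Complex.I • T2) x + (-T1) y), x⟫_ℂ + ⟪A (T1 x + (Complex.I • T2) y), y⟫_ℂ‖
        = ‖⟪A ((T1 + T2) u), u⟫_ℂ - ⟪A ((T1 - T2) v), v⟫_ℂ‖ := hval
      _ ≤ ‖⟪A ((T1 + T2) u), u⟫_ℂ‖ + ‖⟪A ((T1 - T2) v), v⟫_ℂ‖ := norm_sub_le _ _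
      _ ≤ wP * ‖B u‖ ^ 2 + wM * ‖B v‖ ^ 2 := add_le_add (ptP u) (ptM v)
      _ ≤ max wM wP * ‖B u‖ ^ 2 + max wM wP * ‖B v‖ ^ 2 := by
          gcongr
          · exact le_max_right _ _
          · exact le_max_left _ _
      _ = max wM wP := by rw [← mul_add, hcon, mul_one]
  have hSBbdd : BddAbove SB := ⟨max wM wP, hSBub⟩
  -- membership constructors
  have hmemP : ∀ z : H, ‖B z‖ = 1 → ‖⟪A ((T1 + T2) z), z⟫_ℂ‖ ∈ SB := by
    intro z hz
    refine ⟨(c:ℂ) • (z + 0), (-Complex.I * c) • (z - 0), ?_, ?_⟩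
    · have h4 := congrArg Complex.re (aux_id2 A c hc z 0)
      rw [Complex.add_re, Complex.add_re] at h4
      rw [h4]
      have : (⟪A (0:H), (0:H)⟫_ℂ).re = 0 := by simp
      rw [this, add_zero, hre, hz]
      norm_num
    · rw [aux_id A T1 T2 c hc z 0, norm_mul]
      have : ⟪A ((T1 - T2) (0:H)), (0:H)⟫_ℂ = 0 := by simp
      rw [this, sub_zero, norm_neg, Complex.norm_I, one_mul]
  have hmemM : ∀ z : H, ‖B z‖ = 1 → ‖⟪A ((T1 - T2) z), z⟫_ℂ‖ ∈ SB := by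
    intro z hz
    refine ⟨(c:ℂ) • ((0:H) + z), (-Complex.I * c) • ((0:H) - z), ?_, ?_⟩
    · have h4 := congrArg Complex.re (aux_id2 A c hc 0 z)
      rw [Complex.add_re, Complex.add_re] at h4
      rw [h4]
      have : (⟪A (0:H), (0:H)⟫_ℂ).re = 0 := by simp
      rw [this, zero_add, hre, hz]
      norm_num
    · rw [aux_id A T1 T2 c hc 0 z, norm_mul]
      have : ⟪A ((T1 + T2) (0:H)), (0:H)⟫_ℂ = 0 := by simp
      rw [this, zero_sub, norm_neg, norm_neg, Complex.norm_I, one_mul]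
  have hSBnn : 0 ≤ sSup SB :=
    (norm_nonneg _).trans (le_csSup hSBbdd (hmemP e he))
  rw [hwB, hPg, hMg]
  apply le_antisymm
  · exact Real.sSup_le hSBub (le_trans nnP (le_max_right _ _))
  · apply max_le
    · rw [hwMd]
      apply Real.sSup_le _ hSBnn
      rintro r ⟨z, hz, rfl⟩
      rw [haN] at hz
      exact le_csSup hSBbdd (hmemM z hz)
    · rw [hwPd]
      apply Real.sSup_le _ hSBnn
      rintro r ⟨z, hz, rfl⟩
      rw [haN] at hz
      exact le_csSup hSBbdd (hmemP z hz)
end
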